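/- arXiv:1012.2089 — 10 statements merged into one kernel-verified Lean document; each statement's English description precedes it below -/
import Mathlib

section
/- Let H be a finite group, D ⊆ H with |des(H,D)| = |H|, and G ≤ Aut(des(H,D)) containing all right translations. If the point stabilizer G_p fixes a block B and also fixes the block Bh for some h ∈ H, then G_p fixes the point p·h⁻¹. -/
open Pointwise MulAction

/-- In a Cayley design `des(H,D)` with as many blocks as points,
if the point stabilizer `G_p` fixes the block `B` and also the block `B·h`,
then it fixes the point `p·h⁻¹`. -/
theorem stmt_1 {H : Type*} [Group H] [Fintype H]
    (D : Set H) (blocks : Set (Set H))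
    (hblocks : blocks = {B | ∃ h : H, B = (fun x => x * h) '' D})
    (hcard : Nat.card blocks = Nat.card H)
    (G : Subgroup (Equiv.Perm H))
    (hGaut : ∀ g ∈ G, ∀ B ∈ blocks, (g : H → H) '' B ∈ blocks)
    (htrans : ∀ h : H, Equiv.mulRight h ∈ G)
    (p : H) (h : H) (B : Set H) (hB : B ∈ blocks)
    (hfixB : ∀ g ∈ G, g p = p → (g : H → H) '' B = B)
    (hfixBh : ∀ g ∈ G, g p = p →
      (g : H → H) '' ((fun x => x * h) '' B) = (fun x => x * h) '' B) :
    ∀ g ∈ G, g p = p → g (p * h⁻¹) = p * h⁻¹ := by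
  classical
  intro g hg hgp
  set Bh : Set H := (fun x => x * h) '' B with hBhdef
  have hsmulpt : ∀ (k : G) (x : H), k • x = (k : Equiv.Perm H) x := fun _ _ => rfl
  have hsmulset : ∀ (k : G) (s : Set H), k • s = (k : Equiv.Perm H) '' s := by
    intro k s; rfl
  have himg : ∀ (a b : H) (s : Set H),
      (fun x => x * a) '' ((fun x => x * b) '' s) = (fun x => x * (b * a)) '' s := by
    intro a b s; rw [Set.image_image]; simp [mul_assoc]
  obtain ⟨h₀, hh₀⟩ : ∃ h₀ : H, B = (fun x => x * h₀) '' D := by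
    rw [hblocks] at hB; exact hB
  have hBh_eq : Bh = (fun x => x * (h₀ * h)) '' D := by
    rw [hBhdef, hh₀, himg]
  have hBh_blocks : Bh ∈ blocks := by
    rw [hblocks]; exact ⟨h₀ * h, hBh_eq⟩
  -- orbit of p is everything
  have horbp : orbit G p = Set.univ := by
    ext q
    simp only [Set.mem_univ, iff_true, MulAction.mem_orbit_iff]
    refine ⟨⟨Equiv.mulRight (p⁻¹ * q), htrans _⟩, ?_⟩
    rw [hsmulpt]
    simp [mul_assoc]
  -- orbit of Bh is blocks
  have horbB : orbit G Bh = blocks := by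
    ext S
    constructor
    · rintro ⟨k, rfl⟩
      show k • Bh ∈ blocks
      rw [hsmulset]
      exact hGaut k k.2 Bh hBh_blocks
    · intro hS
      rw [hblocks] at hS
      obtain ⟨k, rfl⟩ := hS
      refine ⟨⟨Equiv.mulRight ((h₀ * h)⁻¹ * k), htrans _⟩, ?_⟩
      show (⟨Equiv.mulRight ((h₀ * h)⁻¹ * k), htrans _⟩ : G) • Bh = _
      rw [hsmulset]
      show (Equiv.mulRight ((h₀ * h)⁻¹ * k) : H → H) '' Bh = _
      have : (Equiv.mulRight ((h₀ * h)⁻¹ * k) : H → H) = fun x => x * ((h₀ * h)⁻¹ * k) := rfl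
      rw [this, hBh_eq, himg]
      simp [mul_assoc]
  haveI : Fintype (Equiv.Perm H) := Fintype.ofFinite _
  haveI : Fintype G := Fintype.ofFinite _
  haveI : Fintype (orbit G p) := Fintype.ofFinite _
  haveI : Fintype (orbit G Bh) := Fintype.ofFinite _
  haveI : Fintype (stabilizer G p) := Fintype.ofFinite _
  haveI : Fintype (stabilizer G Bh) := Fintype.ofFinite _
  have h1 : Nat.card (orbit G p) * Nat.card (stabilizer G p) = Nat.card G := by
    simp only [Nat.card_eq_fintype_card]
    exact MulAction.card_orbit_mul_card_stabilizer_eq_card_group G p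
  have h2 : Nat.card (orbit G Bh) * Nat.card (stabilizer G Bh) = Nat.card G := by
    simp only [Nat.card_eq_fintype_card]
    exact MulAction.card_orbit_mul_card_stabilizer_eq_card_group G Bh
  have hcardorbp : Nat.card (orbit G p) = Nat.card H := by
    rw [horbp]
    exact Nat.card_congr (Equiv.Set.univ H)
  have hcardorbB : Nat.card (orbit G Bh) = Nat.card H := by
    rw [horbB]; exact hcard
  have hHpos : 0 < Nat.card H := Nat.card_pos
  have hstabcard : Nat.card (stabilizer G Bh) = Nat.card (stabilizer G p) := by
    have := h1.trans h2.symm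
    rw [hcardorbp, hcardorbB] at this
    exact (Nat.eq_of_mul_eq_mul_left hHpos this).symm
  have hle : stabilizer G p ≤ stabilizer G Bh := by
    intro k hk
    rw [MulAction.mem_stabilizer_iff] at hk ⊢
    rw [hsmulset]
    exact hfixBh k k.2 (by rw [hsmulpt] at hk; exact hk)
  have hst : stabilizer G p = stabilizer G Bh :=
    Subgroup.eq_of_le_of_card_ge hle (le_of_eq hstabcard)
  -- conjugate g by the right translation by h
  set gg : G := ⟨g, hg⟩
  set r : G := ⟨Equiv.mulRight h, htrans h⟩
  have hsBh : r * gg * r⁻¹ ∈ stabilizer G Bh := by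
    rw [MulAction.mem_stabilizer_iff, hsmulset]
    have e1 : ((r * gg * r⁻¹ : G) : Equiv.Perm H)
        = Equiv.mulRight h * g * (Equiv.mulRight h)⁻¹ := rfl
    rw [e1]
    have e2 : ((Equiv.mulRight h * g * (Equiv.mulRight h)⁻¹ : Equiv.Perm H) : H → H)
        = (fun x => x * h) ∘ (g : H → H) ∘ (fun x => x * h⁻¹) := by
      ext x; simp [Equiv.Perm.mul_apply]
    rw [e2, Set.image_comp, Set.image_comp]
    have e3 : (fun x => x * h⁻¹) '' Bh = B := by
      rw [hBhdef, himg]; simp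
    rw [e3, hfixB g hg hgp]
  have hsp : r * gg * r⁻¹ ∈ stabilizer G p := hst ▸ hsBh
  rw [MulAction.mem_stabilizer_iff] at hsp
  rw [hsmulpt] at hsp
  have e1 : ((r * gg * r⁻¹ : G) : Equiv.Perm H) p
      = (g (p * h⁻¹)) * h := by
    show (Equiv.mulRight h * g * (Equiv.mulRight h)⁻¹ : Equiv.Perm H) p = _
    simp [Equiv.Perm.mul_apply]
  rw [e1] at hsp
  exact eq_mul_inv_of_mul_eq hsp
end

section
/- A subset D of a finite group H is a skew Hadamard difference set (i.e., H∖{1} is the disjoint union of D and D⁻¹, and D·D⁻¹ as a multiset hits 1 exactly |D| - λ times and every other element exactly λ times, with appropriate parameters) if and only if the partition {{1}, D, D⁻¹} of H is a Schur partition of H. -/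
open scoped Pointwise

/-- The ℤ-submodule of the group ring ℤ[H] spanned by 1, \underline{D} and
\underline{D⁻¹}. -/
noncomputable def schurSpan {H : Type*} [Group H] [DecidableEq H] (D : Finset H) :
    Submodule ℤ (MonoidAlgebra ℤ H) :=
  Submodule.span ℤ
    ({MonoidAlgebra.of ℤ H 1, ∑ d ∈ D, MonoidAlgebra.of ℤ H d,
      ∑ d ∈ D⁻¹, MonoidAlgebra.of ℤ H d} : Set (MonoidAlgebra ℤ H))

namespace SchurAux2

open MonoidAlgebra Finset

variable {H : Type*} [Group H] [Fintype H] [DecidableEq H]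

/-- Coefficient of a fiber sum. -/
lemma sum_of_apply {ι : Type*} (s : Finset ι) (f : ι → H) (h : H) :
    (∑ p ∈ s, MonoidAlgebra.of ℤ H (f p)).coeff h = ((s.filter (fun p => f p = h)).card : ℤ) := by
  rw [MonoidAlgebra.coeff_sum, Finset.sum_apply']
  simp only [MonoidAlgebra.of_apply, MonoidAlgebra.coeff_single, Finsupp.single_apply]
  rw [Finset.sum_ite, Finset.sum_const_zero, add_zero, Finset.sum_const, nsmul_eq_mul, mul_one]

lemma u_apply (S : Finset H) (h : H) :
    (∑ d ∈ S, MonoidAlgebra.of ℤ H d).coeff h = if h ∈ S then 1 else 0 := by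
  rw [MonoidAlgebra.coeff_sum, Finset.sum_apply']
  simp [MonoidAlgebra.of_apply, MonoidAlgebra.coeff_single, Finsupp.single_apply, Finset.sum_ite_eq]

lemma add_apply' (x y : MonoidAlgebra ℤ H) (g : H) : (x + y).coeff g = x.coeff g + y.coeff g := rfl

lemma smul_apply' (z : ℤ) (x : MonoidAlgebra ℤ H) (g : H) : (z • x).coeff g = z * x.coeff g := rfl

lemma one_apply' (h : H) : (1 : MonoidAlgebra ℤ H).coeff h = if h = 1 then 1 else 0 := by
  rw [MonoidAlgebra.one_def, MonoidAlgebra.coeff_single, Finsupp.single_apply]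
  simp [eq_comm]

lemma sum_inv' (S : Finset H) (f : H → MonoidAlgebra ℤ H) : ∑ d ∈ S⁻¹, f d = ∑ d ∈ S, f d⁻¹ := by
  rw [Finset.inv_def, Finset.sum_image (fun a _ b _ h => inv_injective h)]

/-- The product `\underline{D} · \underline{D⁻¹}` expanded as a sum over `D ×ˢ D`. -/
lemma u_mul_inv (D : Finset H) :
    (∑ d ∈ D, MonoidAlgebra.of ℤ H d) * (∑ d ∈ D⁻¹, MonoidAlgebra.of ℤ H d)
      = ∑ p ∈ D ×ˢ D, MonoidAlgebra.of ℤ H (p.1 * p.2⁻¹) := by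
  rw [Finset.sum_mul_sum, Finset.sum_product]
  refine Finset.sum_congr rfl fun a _ => ?_
  rw [sum_inv']
  refine Finset.sum_congr rfl fun b _ => ?_
  rw [← map_mul]

lemma prod_expand (S T : Finset H) :
    (∑ d ∈ S, MonoidAlgebra.of ℤ H d) * (∑ d ∈ T, MonoidAlgebra.of ℤ H d)
      = ∑ p ∈ S ×ˢ T, MonoidAlgebra.of ℤ H (p.1 * p.2) := by
  rw [Finset.sum_mul_sum, Finset.sum_product]
  simp [MonoidAlgebra.of_apply, MonoidAlgebra.single_mul_single]

lemma of_mul_univ (g : H) :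
    MonoidAlgebra.of ℤ H g * (∑ h : H, MonoidAlgebra.of ℤ H h) = ∑ h : H, MonoidAlgebra.of ℤ H h := by
  rw [Finset.mul_sum]
  simp only [← map_mul]
  exact Fintype.sum_bijective (g * ·) (Group.mulLeft_bijective g) _ _ (fun x => rfl)

lemma univ_mul_of (g : H) :
    (∑ h : H, MonoidAlgebra.of ℤ H h) * MonoidAlgebra.of ℤ H g = ∑ h : H, MonoidAlgebra.of ℤ H h := by
  rw [Finset.sum_mul]
  simp only [← map_mul]
  exact Fintype.sum_bijective (· * g) (Group.mulRight_bijective g) _ _ (fun x => rfl)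

lemma u_mul_univ (S : Finset H) :
    (∑ d ∈ S, MonoidAlgebra.of ℤ H d) * (∑ h : H, MonoidAlgebra.of ℤ H h)
      = (S.card : ℤ) • (∑ h : H, MonoidAlgebra.of ℤ H h) := by
  rw [Finset.sum_mul]
  rw [Finset.sum_congr rfl (fun d _ => of_mul_univ d), Finset.sum_const]
  simp

lemma univ_mul_u (S : Finset H) :
    (∑ h : H, MonoidAlgebra.of ℤ H h) * (∑ d ∈ S, MonoidAlgebra.of ℤ H d)
      = (S.card : ℤ) • (∑ h : H, MonoidAlgebra.of ℤ H h) := by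
  rw [Finset.mul_sum]
  rw [Finset.sum_congr rfl (fun d _ => univ_mul_of d), Finset.sum_const]
  simp

lemma diag_card' (D : Finset H) :
    ((D ×ˢ D).filter fun p => p.1 * p.2⁻¹ = 1).card = D.card := by
  rw [show (D ×ˢ D).filter (fun p => p.1 * p.2⁻¹ = 1) = D.diag from ?_, Finset.diag_card]
  ext p
  simp only [Finset.mem_filter, Finset.mem_product, Finset.mem_diag, mul_inv_eq_one]
  constructor
  · rintro ⟨⟨h1, _⟩, h3⟩; exact ⟨h1, h3⟩
  · rintro ⟨h1, h3⟩; exact ⟨⟨h1, h3 ▸ h1⟩, h3⟩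

lemma c_inv (D : Finset H) (h : H) :
    ((D ×ˢ D).filter fun p => p.1 * p.2⁻¹ = h⁻¹).card
      = ((D ×ˢ D).filter fun p => p.1 * p.2⁻¹ = h).card := by
  refine Finset.card_bij' (fun p _ => (p.2, p.1)) (fun p _ => (p.2, p.1)) ?_ ?_ ?_ ?_ <;>
    simp only [Finset.mem_filter, Finset.mem_product]
  · rintro ⟨a, b⟩ ⟨⟨ha, hb⟩, hab⟩
    refine ⟨⟨hb, ha⟩, ?_⟩
    simp only at hab ⊢
    rw [← inv_inv h, ← hab]; group
  · rintro ⟨a, b⟩ ⟨⟨ha, hb⟩, hab⟩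
    refine ⟨⟨hb, ha⟩, ?_⟩
    simp only at hab ⊢
    rw [← hab]; group
  · intros; trivial
  · intros; trivial

end SchurAux2

/-- `D` is a skew Hadamard difference set in the finite group `H`
(i.e. `H∖{1}` is the disjoint union of `D` and `D⁻¹` and every `h ≠ 1` has exactly
`(|H|-3)/4` representations `d·d'⁻¹`) iff `{{1}, D, D⁻¹}` is a Schur partition of `H`
(i.e. these sets partition `H` and the ℤ-span of their indicator elements is closed
under multiplication in ℤ[H]). -/
theorem stmt_2 {H : Type*} [Group H] [Fintype H] [DecidableEq H] (D : Finset H) :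
    (D ∩ D⁻¹ = ∅ ∧ D ∪ D⁻¹ = Finset.univ \ {1} ∧
      ∀ h : H, h ≠ 1 →
        ((D ×ˢ D).filter (fun x => x.1 * x.2⁻¹ = h)).card = (Fintype.card H - 3) / 4)
    ↔
    (D ∩ D⁻¹ = ∅ ∧ D ∪ D⁻¹ = Finset.univ \ {1} ∧
      ∀ x y : MonoidAlgebra ℤ H, x ∈ schurSpan D → y ∈ schurSpan D →
        x * y ∈ schurSpan D) := by
  classical
  open SchurAux2 Finset in
  -- notation
  set A : MonoidAlgebra ℤ H := ∑ d ∈ D, MonoidAlgebra.of ℤ H d with hA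
  set B : MonoidAlgebra ℤ H := ∑ d ∈ D⁻¹, MonoidAlgebra.of ℤ H d with hB
  set G : MonoidAlgebra ℤ H := ∑ h : H, MonoidAlgebra.of ℤ H h with hG
  have hone : MonoidAlgebra.of ℤ H (1 : H) = 1 := map_one _
  have hspan : schurSpan D = Submodule.span ℤ ({1, A, B} : Set (MonoidAlgebra ℤ H)) := by
    rw [schurSpan, hone]
  constructor
  · rintro ⟨h1, h2, h3⟩
    refine ⟨h1, h2, ?_⟩
    -- basic membership facts
    have hnot1 : (1 : H) ∉ D ∧ (1 : H) ∉ D⁻¹ := by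
      constructor <;> intro hmem <;>
      · have : (1:H) ∈ D ∪ D⁻¹ := by simp [Finset.mem_union, hmem]
        rw [h2] at this; simp at this
    have m1 : (1 : MonoidAlgebra ℤ H) ∈ schurSpan D := by
      rw [hspan]; exact Submodule.subset_span (by simp)
    have mA : A ∈ schurSpan D := by
      rw [hspan]; exact Submodule.subset_span (by simp)
    have mB : B ∈ schurSpan D := by
      rw [hspan]; exact Submodule.subset_span (by simp)
    -- G = 1 + A + B
    have hsum : (1 : MonoidAlgebra ℤ H) + A + B = G := by
      ext g
      simp only [add_apply', hA, hB, hG, u_apply, one_apply']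
      by_cases hg : g = 1
      · simp [hg, hnot1.1, hnot1.2]
      · have hg' : g ∈ D ∪ D⁻¹ := by rw [h2]; simp [hg]
        have hcases := Finset.mem_union.mp hg'
        have hnboth : ¬ (g ∈ D ∧ g ∈ D⁻¹) := by
          rintro ⟨u1, u2⟩
          have : g ∈ D ∩ D⁻¹ := Finset.mem_inter.mpr ⟨u1, u2⟩
          rw [h1] at this; simp at this
        rcases hcases with hc | hc
        · have : g ∉ D⁻¹ := fun hc2 => hnboth ⟨hc, hc2⟩
          simp [hg, hc, this]
        · have : g ∉ D := fun hc2 => hnboth ⟨hc2, hc⟩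
          simp [hg, hc, this]
    have mG : G ∈ schurSpan D := by
      rw [← hsum]; exact Submodule.add_mem _ (Submodule.add_mem _ m1 mA) mB
    -- the key difference-set identity
    set lam : ℕ := (Fintype.card H - 3) / 4 with hlam
    have hAB : A * B = (D.card : ℤ) • 1 + ((lam : ℤ) • A + (lam : ℤ) • B) := by
      rw [hA, hB, u_mul_inv]
      ext g
      rw [sum_of_apply]
      simp only [add_apply', smul_apply', u_apply, one_apply']
      by_cases hg : g = 1
      · subst hg
        rw [diag_card']
        simp [hnot1.1, hnot1.2]
      · rw [h3 g hg]
        have hg' : g ∈ D ∪ D⁻¹ := by rw [h2]; simp [hg]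
        have hnboth : ¬ (g ∈ D ∧ g ∈ D⁻¹) := by
          rintro ⟨u1, u2⟩
          have : g ∈ D ∩ D⁻¹ := Finset.mem_inter.mpr ⟨u1, u2⟩
          rw [h1] at this; simp at this
        rcases Finset.mem_union.mp hg' with hc | hc
        · have : g ∉ D⁻¹ := fun hc2 => hnboth ⟨hc, hc2⟩
          simp [hg, hc, this]
        · have : g ∉ D := fun hc2 => hnboth ⟨hc2, hc⟩
          simp [hg, hc, this]
    have mAB : A * B ∈ schurSpan D := by
      rw [hAB]
      exact Submodule.add_mem _ (Submodule.smul_mem _ _ m1)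
        (Submodule.add_mem _ (Submodule.smul_mem _ _ mA) (Submodule.smul_mem _ _ mB))
    -- commutation and the remaining products
    have hBval : B = G - 1 - A := by rw [← hsum]; abel
    have hAval : A = G - 1 - B := by rw [← hsum]; abel
    have hAG : A * G = (D.card : ℤ) • G := u_mul_univ D
    have hGA : G * A = (D.card : ℤ) • G := univ_mul_u D
    have hBG : B * G = ((D⁻¹ : Finset H).card : ℤ) • G := u_mul_univ D⁻¹
    have hGB : G * B = ((D⁻¹ : Finset H).card : ℤ) • G := univ_mul_u D⁻¹
    have hcomm : B * A = A * B := by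
      conv_lhs => rw [hBval]
      conv_rhs => rw [hBval]
      rw [sub_mul, sub_mul, one_mul, mul_sub, mul_sub, mul_one, hAG, hGA]
    have mBA : B * A ∈ schurSpan D := by rw [hcomm]; exact mAB
    have mAA : A * A ∈ schurSpan D := by
      have : A * A = (D.card : ℤ) • G - A - A * B := by
        calc A * A = A * (G - 1 - B) := by rw [← hAval]
          _ = A * G - A * 1 - A * B := by rw [mul_sub, mul_sub]
          _ = (D.card : ℤ) • G - A - A * B := by rw [hAG, mul_one]
      rw [this]
      exact Submodule.sub_mem _ (Submodule.sub_mem _ (Submodule.smul_mem _ _ mG) mA) mAB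
    have mBB : B * B ∈ schurSpan D := by
      have : B * B = ((D⁻¹ : Finset H).card : ℤ) • G - B - B * A := by
        calc B * B = B * (G - 1 - A) := by rw [← hBval]
          _ = B * G - B * 1 - B * A := by rw [mul_sub, mul_sub]
          _ = ((D⁻¹ : Finset H).card : ℤ) • G - B - B * A := by rw [hBG, mul_one]
      rw [this]
      exact Submodule.sub_mem _ (Submodule.sub_mem _ (Submodule.smul_mem _ _ mG) mB) mBA
    -- closure by double induction
    intro x y hx hy
    rw [hspan] at hx hy ⊢
    induction hx using Submodule.span_induction with
    | mem a ha =>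
      induction hy using Submodule.span_induction with
      | mem b hb =>
        rw [← hspan]
        simp only [Set.mem_insert_iff, Set.mem_singleton_iff] at ha hb
        rcases ha with rfl | rfl | rfl <;> rcases hb with rfl | rfl | rfl
        · rw [one_mul]; exact m1
        · rw [one_mul]; exact mA
        · rw [one_mul]; exact mB
        · rw [mul_one]; exact mA
        · exact mAA
        · exact mAB
        · rw [mul_one]; exact mB
        · exact mBA
        · exact mBB
      | zero => rw [mul_zero]; exact Submodule.zero_mem _
      | add b c _ _ hb hc => rw [mul_add]; exact Submodule.add_mem _ hb hc
      | smul r b _ hb => rw [mul_smul_comm]; exact Submodule.smul_mem _ _ hb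
    | zero => rw [zero_mul]; exact Submodule.zero_mem _
    | add a b _ _ ha hb => rw [add_mul]; exact Submodule.add_mem _ ha hb
    | smul r a _ ha => rw [smul_mul_assoc]; exact Submodule.smul_mem _ _ ha
  · rintro ⟨h1, h2, h3⟩
    refine ⟨h1, h2, ?_⟩
    intro h hne
    -- notation for counts
    set c : H → ℕ := fun g => ((D ×ˢ D).filter (fun p => p.1 * p.2⁻¹ = g)).card with hc
    -- A*B is in the span
    have mA : A ∈ schurSpan D := by
      rw [hspan]; exact Submodule.subset_span (by simp)
    have mB : B ∈ schurSpan D := by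
      rw [hspan]; exact Submodule.subset_span (by simp)
    have hmem : A * B ∈ Submodule.span ℤ
        (insert (1 : MonoidAlgebra ℤ H) (insert A ({B} : Set (MonoidAlgebra ℤ H)))) := by
      rw [← hspan] at *; exact h3 A B mA mB
    obtain ⟨z1, y1, hy1, hx1⟩ := Submodule.mem_span_insert.mp hmem
    obtain ⟨z2, y2, hy2, hx2⟩ := Submodule.mem_span_insert.mp hy1
    obtain ⟨z3, hz3⟩ := Submodule.mem_span_singleton.mp hy2
    have hid : A * B = z1 • (1 : MonoidAlgebra ℤ H) + (z2 • A + z3 • B) := by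
      rw [hx1, hx2, hz3]
    -- coefficient extraction
    have coeff : ∀ g : H, (c g : ℤ)
        = z1 * (if g = 1 then 1 else 0)
          + (z2 * (if g ∈ D then 1 else 0) + z3 * (if g ∈ D⁻¹ then 1 else 0)) := by
      intro g
      have : (A * B).coeff g = (z1 • (1 : MonoidAlgebra ℤ H) + (z2 • A + z3 • B)).coeff g := by rw [hid]
      rw [hA, hB, u_mul_inv, sum_of_apply] at this
      simpa only [add_apply', smul_apply', hA, hB, u_apply, one_apply', hc] using this
    -- facts about the partition
    have hnot1 : (1 : H) ∉ D ∧ (1 : H) ∉ D⁻¹ := by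
      constructor <;> intro hmem' <;>
      · have : (1:H) ∈ D ∪ D⁻¹ := by simp [Finset.mem_union, hmem']
        rw [h2] at this; simp at this
    have hnboth : ∀ g : H, ¬ (g ∈ D ∧ g ∈ D⁻¹) := by
      rintro g ⟨u1, u2⟩
      have : g ∈ D ∩ D⁻¹ := Finset.mem_inter.mpr ⟨u1, u2⟩
      rw [h1] at this; simp at this
    have hne1D : ∀ g ∈ D, g ≠ 1 := fun g hg he => hnot1.1 (he ▸ hg)
    have hne1Di : ∀ g ∈ D⁻¹, g ≠ 1 := fun g hg he => hnot1.2 (he ▸ hg)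
    -- c is constant z2 on D, z3 on D⁻¹
    have hcD : ∀ g ∈ D, (c g : ℤ) = z2 := by
      intro g hg
      have hgd : g ∉ D⁻¹ := fun h' => hnboth g ⟨hg, h'⟩
      have := coeff g
      simp [hne1D g hg, hg, hgd] at this
      exact this
    have hcDi : ∀ g ∈ D⁻¹, (c g : ℤ) = z3 := by
      intro g hg
      have hgd : g ∉ D := fun h' => hnboth g ⟨h', hg⟩
      have := coeff g
      simp [hne1Di g hg, hg, hgd] at this
      exact this
    -- z2 = z3 via the inverse symmetry
    have hDne : D.Nonempty := by
      have hh' : h ∈ D ∪ D⁻¹ := by rw [h2]; simp [hne]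
      rcases Finset.mem_union.mp hh' with hc' | hc'
      · exact ⟨h, hc'⟩
      · exact ⟨h⁻¹, Finset.mem_inv'.mp hc'⟩
    obtain ⟨d0, hd0⟩ := hDne
    have hsym : ∀ g : H, c g⁻¹ = c g := fun g => c_inv D g
    have hz23 : z2 = z3 := by
      have e1 : (c d0 : ℤ) = z2 := hcD d0 hd0
      have e2 : (c d0⁻¹ : ℤ) = z3 := hcDi d0⁻¹ (Finset.inv_mem_inv hd0)
      rw [hsym d0] at e2
      rw [← e1, ← e2]
    -- β is the common value
    have hcall : ∀ g ∈ D ∪ D⁻¹, c g = c h := by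
      have hch : (c h : ℤ) = z2 := by
        have hh' : h ∈ D ∪ D⁻¹ := by rw [h2]; simp [hne]
        rcases Finset.mem_union.mp hh' with hc' | hc'
        · exact hcD h hc'
        · rw [hz23]; exact hcDi h hc'
      intro g hg
      have : (c g : ℤ) = z2 := by
        rcases Finset.mem_union.mp hg with hc' | hc'
        · exact hcD g hc'
        · rw [hz23]; exact hcDi g hc'
      exact_mod_cast this.trans hch.symm
    set β : ℕ := c h with hβ
    -- counting
    have hktotal : (D ×ˢ D).card = ∑ g : H, c g := by
      refine Finset.card_eq_sum_card_fiberwise (fun p _ => Finset.mem_univ _)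
    have hcard_union : (D ∪ D⁻¹).card = 2 * D.card := by
      rw [Finset.card_union_of_disjoint (Finset.disjoint_iff_inter_eq_empty.mpr h1),
        Finset.card_inv]
      ring
    have hsplit : ∑ g : H, c g = c 1 + ∑ g ∈ D ∪ D⁻¹, c g := by
      rw [show (Finset.univ : Finset H) = insert 1 (D ∪ D⁻¹) from ?_]
      · rw [Finset.sum_insert (by intro hmem'; exact (hnboth 1) (by
          rcases Finset.mem_union.mp hmem' with hx | hx
          · exact absurd hx hnot1.1
          · exact absurd hx hnot1.2) |>.elim)]
      · rw [h2]
        ext g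
        by_cases hg : g = 1 <;> simp [hg]
    have hc1 : c 1 = D.card := diag_card' D
    have hsum2 : ∑ g ∈ D ∪ D⁻¹, c g = 2 * D.card * β := by
      rw [Finset.sum_congr rfl hcall, Finset.sum_const, hcard_union, smul_eq_mul]
    have hkk : D.card * D.card = D.card + 2 * D.card * β := by
      have := hktotal
      rw [hsplit, hc1, hsum2, Finset.card_product] at this
      exact this
    have hkpos : 0 < D.card := Finset.card_pos.mpr ⟨d0, hd0⟩
    have hk : D.card = 2 * β + 1 := by
      have h' : D.card * D.card = D.card * (2 * β + 1) := by rw [hkk]; ring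
      exact Nat.eq_of_mul_eq_mul_left hkpos h'
    -- card H = 4β + 3
    have hcardH : Fintype.card H = 2 * D.card + 1 := by
      have : (Finset.univ \ {1} : Finset H).card = Fintype.card H - 1 := by
        rw [Finset.card_sdiff_of_subset (by simp)]
        simp [Finset.card_univ]
      rw [← h2, hcard_union] at this
      have hpos : 0 < Fintype.card H := Fintype.card_pos
      omega
    show c h = (Fintype.card H - 3) / 4
    rw [hcardH, hk]
    omega
end

section
/- Let q = pⁿ with p an odd prime, q ≡ 3 (mod 4), and let z = Σ_{x ∈ (F_q^*)²} τ(x) where τ(x) = ω_p^{tr(x)} is the canonical additive character summed over nonzero squares. Then z = (-1 ± √(-q))/2; in particular z + z̄ = -1 and (z - z̄)² = -q. -/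
open scoped Classical

/-- The set of nonzero squares of a finite field, as a `Finset`. -/
noncomputable def sqFinset (F : Type*) [Field F] [Fintype F] : Finset F :=
  Finset.univ.filter fun x : F => x ≠ 0 ∧ IsSquare x

/-- `z = Σ_{x ∈ (F_q^*)²} τ(x)`, the sum of the additive character over the
nonzero squares. -/
noncomputable def zval {F : Type*} [Field F] [Fintype F] (ψ : AddChar F ℂ) : ℂ :=
  ∑ x ∈ sqFinset F, ψ x

/-- for `q ≡ 3 (mod 4)` and a nontrivial additive character `τ`
of `F_q`, the sum `z` of `τ` over the nonzero squares satisfies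
`z = (-1 ± √(-q))/2`; in particular `z + z̄ = -1` and `(z - z̄)² = -q`. -/
theorem stmt_3 {F : Type*} [Field F] [Fintype F]
    (hq : Fintype.card F % 4 = 3) (ψ : AddChar F ℂ) (hψ : ψ ≠ 1) :
    zval ψ + (starRingEnd ℂ) (zval ψ) = -1 ∧
    (zval ψ - (starRingEnd ℂ) (zval ψ)) ^ 2 = -(Fintype.card F : ℂ) ∧
    (zval ψ = (-1 + Complex.I * (Real.sqrt (Fintype.card F) : ℂ)) / 2 ∨
     zval ψ = (-1 - Complex.I * (Real.sqrt (Fintype.card F) : ℂ)) / 2) := by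
  classical
  have hchar2 : ringChar F ≠ 2 := by
    intro h
    have := FiniteField.even_card_of_char_two (F := F) h
    omega
  -- the negation of a nonzero square is a nonsquare and conversely
  have hqneg : quadraticChar F (-1) = -1 := by
    rw [quadraticChar_neg_one hchar2, ZMod.χ₄_nat_three_mod_four hq]
  have hswap : ∀ x : F, x ≠ 0 → (IsSquare x ↔ ¬ IsSquare (-x)) := by
    intro x hx
    have hxn : (-x : F) ≠ 0 := neg_ne_zero.mpr hx
    rw [← quadraticChar_one_iff_isSquare hx, ← quadraticChar_neg_one_iff_not_isSquare]
    have : quadraticChar F (-x) = - quadraticChar F x := by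
      rw [show (-x : F) = -1 * x by ring, map_mul, hqneg]; ring
    rw [this]
    constructor
    · intro h; rw [h]
    · intro h; omega
  set S : Finset F := sqFinset F with hS
  set T : Finset F := Finset.univ.filter (fun x : F => x ≠ 0 ∧ ¬ IsSquare x) with hT
  have hmemS : ∀ x : F, x ∈ S ↔ x ≠ 0 ∧ IsSquare x := by
    intro x; simp [hS, sqFinset]
  have hmemT : ∀ x : F, x ∈ T ↔ x ≠ 0 ∧ ¬ IsSquare x := by
    intro x; simp [hT]
  have himg : S.image (fun x => -x) = T := by
    ext y
    simp only [Finset.mem_image, hmemS, hmemT]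
    constructor
    · rintro ⟨x, ⟨hx0, hxs⟩, rfl⟩
      exact ⟨neg_ne_zero.mpr hx0, (hswap x hx0).mp hxs⟩
    · rintro ⟨hy0, hys⟩
      refine ⟨-y, ⟨neg_ne_zero.mpr hy0, ?_⟩, by ring⟩
      rw [hswap (-y) (neg_ne_zero.mpr hy0), neg_neg]
      exact hys
  have hconj : (starRingEnd ℂ) (zval ψ) = ∑ x ∈ T, ψ x := by
    rw [zval, map_sum, ← himg, Finset.sum_image (by intro a _ b _ h; exact neg_injective h)]
    exact Finset.sum_congr rfl fun x _ => (AddChar.map_neg_eq_conj ψ x).symm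
  have hdisj : Disjoint S T := by
    rw [Finset.disjoint_left]
    intro a haS haT
    rw [hmemS] at haS; rw [hmemT] at haT
    exact haT.2 haS.2
  have hunion : S ∪ T = Finset.univ.erase 0 := by
    ext x
    simp only [Finset.mem_union, hmemS, hmemT, Finset.mem_erase, Finset.mem_univ, and_true]
    tauto
  have hsum_all : ∑ x : F, ψ x = 0 := AddChar.sum_eq_zero_of_ne_one hψ
  have herase : ∑ x ∈ Finset.univ.erase (0 : F), ψ x = -1 := by
    have h0 := Finset.add_sum_erase Finset.univ (fun x => ψ x) (Finset.mem_univ (0 : F))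
    rw [hsum_all] at h0
    simp only [ψ.map_zero_eq_one] at h0
    linear_combination h0
  have h1 : zval ψ + (starRingEnd ℂ) (zval ψ) = -1 := by
    rw [hconj, zval, ← hS, ← Finset.sum_union hdisj, hunion, herase]
  -- Gauss sum
  set χ : MulChar F ℂ := (quadraticChar F).ringHomComp (Int.castRingHom ℂ) with hχ
  have hχ1 : χ ≠ 1 :=
    (MulChar.ringHomComp_ne_one_iff Int.cast_injective).mpr
      (quadraticChar_ne_one hchar2)
  have hχ2 : χ.IsQuadratic := (quadraticChar_isQuadratic F).comp _
  have hg : gaussSum χ ψ = zval ψ - (starRingEnd ℂ) (zval ψ) := by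
    rw [hconj, zval, ← hS, gaussSum]
    have h0 := (Finset.add_sum_erase Finset.univ (fun x => χ x * ψ x)
      (Finset.mem_univ (0 : F))).symm
    rw [h0, ← hunion, Finset.sum_union hdisj]
    have hSsum : ∑ x ∈ S, χ x * ψ x = ∑ x ∈ S, ψ x := by
      refine Finset.sum_congr rfl fun x hx => ?_
      rw [hmemS] at hx
      have : quadraticChar F x = 1 := (quadraticChar_one_iff_isSquare hx.1).mpr hx.2
      simp [hχ, MulChar.ringHomComp_apply, this]
    have hTsum : ∑ x ∈ T, χ x * ψ x = -∑ x ∈ T, ψ x := by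
      rw [← Finset.sum_neg_distrib]
      refine Finset.sum_congr rfl fun x hx => ?_
      rw [hmemT] at hx
      have : quadraticChar F x = -1 := quadraticChar_neg_one_iff_not_isSquare.mpr hx.2
      simp [hχ, MulChar.ringHomComp_apply, this]
    rw [hSsum, hTsum, MulChar.map_zero]
    ring
  have hχneg : χ (-1) = -1 := by
    simp [hχ, MulChar.ringHomComp_apply, hqneg]
  have h2 : (zval ψ - (starRingEnd ℂ) (zval ψ)) ^ 2 = -(Fintype.card F : ℂ) := by
    rw [← hg, gaussSum_sq hχ1 hχ2 (AddChar.IsPrimitive.of_ne_one hψ), hχneg]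
    ring
  refine ⟨h1, h2, ?_⟩
  set s : ℂ := ((Real.sqrt (Fintype.card F) : ℝ) : ℂ) with hsdef
  have hs : s ^ 2 = (Fintype.card F : ℂ) := by
    rw [hsdef, ← Complex.ofReal_pow, Real.sq_sqrt (by positivity)]
    norm_num
  have hIs : (Complex.I * s) ^ 2 = -(Fintype.card F : ℂ) := by
    rw [mul_pow, Complex.I_sq, hs]; ring
  have hfac : (zval ψ - (starRingEnd ℂ) (zval ψ) - Complex.I * s) *
      (zval ψ - (starRingEnd ℂ) (zval ψ) + Complex.I * s) = 0 := by
    have : (zval ψ - (starRingEnd ℂ) (zval ψ) - Complex.I * s) *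
        (zval ψ - (starRingEnd ℂ) (zval ψ) + Complex.I * s)
        = (zval ψ - (starRingEnd ℂ) (zval ψ)) ^ 2 - (Complex.I * s) ^ 2 := by ring
    rw [this, h2, hIs]; ring
  have hc : (starRingEnd ℂ) (zval ψ) = -1 - zval ψ := by linear_combination h1
  rcases mul_eq_zero.mp hfac with h | h
  · left
    rw [hc] at h
    linear_combination h / 2
  · right
    rw [hc] at h
    linear_combination h / 2
end

section
/- With q ≡ 3 (mod 4) an odd prime power, V = F_q³ and A = ES as above, the sets O_i = A·(i,0,1)ᵗ for i ∈ F_q, O_∞ = A·(0,1,0)ᵗ, O_• = A·(1,0,0)ᵗ, together with their negatives -O_i, -O_∞, -O_•, form a complete list of the orbits of A on V∖{0}, and these 2(q+2) orbits are pairwise disjoint. -/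
/-- The unitriangular matrix E(x) with rows (1, x, x²/2), (0,1,x), (0,0,1). -/
def Emat {F : Type*} [Field F] (x : F) : Matrix (Fin 3) (Fin 3) F :=
  !![1, x, x ^ 2 / 2; 0, 1, x; 0, 0, 1]

/-- The set `A = E·S = {s • E(x) : x ∈ F_q, s a nonzero square}` of matrices. -/
def Aset (F : Type*) [Field F] : Set (Matrix (Fin 3) (Fin 3) F) :=
  {m | ∃ x s : F, s ≠ 0 ∧ IsSquare s ∧ m = s • Emat x}

/-- Base points of the A-orbits: `(i,0,1)ᵗ` for `i ∈ F_q`, `(0,1,0)ᵗ` (= O_∞),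
`(1,0,0)ᵗ` (= O_•). -/
def baseVec {F : Type*} [Field F] : F ⊕ Fin 2 → Fin 3 → F
  | Sum.inl i => ![i, 0, 1]
  | Sum.inr j => if j = 0 then ![0, 1, 0] else ![1, 0, 0]

/-- The 2(q+2) candidate orbits `O_i` and `-O_i`, `i ∈ I = F_q ∪ {∞,•}`. -/
def orbSet {F : Type*} [Field F] (ib : (F ⊕ Fin 2) × Bool) : Set (Fin 3 → F) :=
  {w | ∃ a ∈ Aset F, w = if ib.2 then a.mulVec (baseVec ib.1)
                          else -(a.mulVec (baseVec ib.1))}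

section Helpers

variable {F : Type*} [Field F]

lemma Emat_mul (h2 : (2:F) ≠ 0) (x y : F) : Emat x * Emat y = Emat (x + y) := by
  ext i j
  fin_cases i <;> fin_cases j <;>
    simp only [Emat, Matrix.mul_apply, Fin.sum_univ_three, Matrix.cons_val', Matrix.cons_val_zero,
      Matrix.cons_val_one, Matrix.head_cons, Matrix.empty_val', Matrix.cons_val_fin_one,
      Matrix.head_fin_const, Matrix.of_apply, Matrix.cons_val_two, Matrix.tail_cons, Fin.reduceFinMk, Fin.isValue] <;>
    field_simp <;> ring

lemma Aset_mul (h2 : (2:F) ≠ 0) {a b : Matrix (Fin 3) (Fin 3) F}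
    (ha : a ∈ Aset F) (hb : b ∈ Aset F) : a * b ∈ Aset F := by
  obtain ⟨x, s, hs, hsq, rfl⟩ := ha
  obtain ⟨y, t, ht, htq, rfl⟩ := hb
  refine ⟨x + y, s * t, mul_ne_zero hs ht, hsq.mul htq, ?_⟩
  rw [Matrix.smul_mul, Matrix.mul_smul, smul_smul, Emat_mul h2]

lemma mulVec_A (s x : F) (v : Fin 3 → F) :
    (s • Emat x).mulVec v =
      ![s * (v 0 + x * v 1 + x ^ 2 / 2 * v 2), s * (v 1 + x * v 2), s * v 2] := by
  funext j
  fin_cases j <;>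
    simp only [Emat, Matrix.mulVec, dotProduct, Fin.sum_univ_three, Matrix.smul_apply,
      Matrix.cons_val', Matrix.cons_val_zero, Matrix.cons_val_one, Matrix.head_cons,
      Matrix.empty_val', Matrix.cons_val_fin_one, Matrix.head_fin_const, Matrix.of_apply,
      Matrix.cons_val_two, Matrix.tail_cons, smul_eq_mul, Fin.zero_eta, Fin.mk_one,
      Fin.isValue] <;> simp [Matrix.vecHead, Matrix.vecTail] <;> ring

lemma mem_neg (ib : F ⊕ Fin 2) (w : Fin 3 → F) :
    w ∈ orbSet (ib, false) ↔ -w ∈ orbSet (ib, true) := by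
  constructor
  · rintro ⟨a, ha, rfl⟩
    exact ⟨a, ha, by simp⟩
  · rintro ⟨a, ha, h⟩
    refine ⟨a, ha, ?_⟩
    simp only [if_true] at h
    simp [← h]

lemma mem_inl_true (h2 : (2:F) ≠ 0) (i : F) (w : Fin 3 → F) :
    w ∈ orbSet (Sum.inl i, true) ↔
      w 2 ≠ 0 ∧ IsSquare (w 2) ∧ w 0 * w 2 - w 1 ^ 2 / 2 = i * w 2 ^ 2 := by
  constructor
  · rintro ⟨a, ⟨x, s, hs, hsq, rfl⟩, rfl⟩
    simp only [if_true, baseVec, mulVec_A, Matrix.cons_val_zero, Matrix.cons_val_one,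
      Matrix.head_cons, Matrix.cons_val_two, Matrix.tail_cons, Fin.reduceFinMk, Fin.isValue]
    refine ⟨by simpa using hs, by simpa using hsq, ?_⟩
    field_simp
    ring
  · rintro ⟨hw2, hsqw, heq⟩
    refine ⟨w 2 • Emat (w 1 / w 2), ⟨w 1 / w 2, w 2, hw2, hsqw, rfl⟩, ?_⟩
    simp only [if_true, baseVec, mulVec_A]
    funext j
    fin_cases j <;>
      simp only [Matrix.cons_val_zero, Matrix.cons_val_one, Matrix.head_cons,
        Matrix.cons_val_two, Matrix.tail_cons, Fin.reduceFinMk, Fin.isValue]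
    · field_simp at heq ⊢
      linear_combination heq
    · field_simp; ring
    · simp

lemma mem_inf_true (w : Fin 3 → F) :
    w ∈ orbSet (Sum.inr 0, true) ↔ w 2 = 0 ∧ w 1 ≠ 0 ∧ IsSquare (w 1) := by
  constructor
  · rintro ⟨a, ⟨x, s, hs, hsq, rfl⟩, rfl⟩
    simp only [if_true, baseVec, if_pos rfl, mulVec_A, Matrix.cons_val_zero, Matrix.cons_val_one,
      Matrix.head_cons, Matrix.cons_val_two, Matrix.tail_cons, Fin.reduceFinMk, Fin.isValue]
    exact ⟨by ring, by simpa using hs, by simpa using hsq⟩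
  · rintro ⟨hw2, hw1, hsqw⟩
    refine ⟨w 1 • Emat (w 0 / w 1), ⟨w 0 / w 1, w 1, hw1, hsqw, rfl⟩, ?_⟩
    simp only [if_true, baseVec, if_pos rfl, mulVec_A]
    funext j
    fin_cases j <;>
      simp only [Matrix.cons_val_zero, Matrix.cons_val_one, Matrix.head_cons,
        Matrix.cons_val_two, Matrix.tail_cons, Fin.reduceFinMk, Fin.isValue]
    · field_simp; ring
    · simp
    · simpa using hw2

lemma mem_dot_true (w : Fin 3 → F) :
    w ∈ orbSet (Sum.inr 1, true) ↔ w 2 = 0 ∧ w 1 = 0 ∧ w 0 ≠ 0 ∧ IsSquare (w 0) := by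
  constructor
  · rintro ⟨a, ⟨x, s, hs, hsq, rfl⟩, rfl⟩
    simp only [if_true, baseVec, mulVec_A, Matrix.cons_val_zero, Matrix.cons_val_one,
      Matrix.head_cons, Matrix.cons_val_two, Matrix.tail_cons, Fin.reduceFinMk, Fin.isValue]
    norm_num [Matrix.cons_val_two, Matrix.tail_cons, Matrix.head_cons]
    exact ⟨by simpa using hs, by simpa using hsq⟩
  · rintro ⟨hw2, hw1, hw0, hsqw⟩
    refine ⟨w 0 • Emat 0, ⟨0, w 0, hw0, hsqw, rfl⟩, ?_⟩
    simp only [if_true, baseVec, mulVec_A]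
    funext j
    fin_cases j <;>
      simp only [Matrix.cons_val_zero, Matrix.cons_val_one, Matrix.head_cons,
        Matrix.cons_val_two, Matrix.tail_cons, Fin.reduceFinMk, Fin.isValue]
    · norm_num
    · simpa using hw1
    · simpa using hw2

open Classical in
/-- The index of the unique candidate orbit a nonzero vector belongs to. -/
noncomputable def idx (w : Fin 3 → F) : (F ⊕ Fin 2) × Bool :=
  if w 2 ≠ 0 then
    (Sum.inl ((w 0 * w 2 - w 1 ^ 2 / 2) / w 2 ^ 2), if IsSquare (w 2) then true else false)
  else if w 1 ≠ 0 then (Sum.inr 0, if IsSquare (w 1) then true else false)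
  else (Sum.inr 1, if IsSquare (w 0) then true else false)

end Helpers

section Main

variable {F : Type*} [Field F] [Fintype F]

lemma square_or_neg (hq : Fintype.card F % 4 = 3) (s : F) (hs : s ≠ 0) :
    IsSquare (-s) ↔ ¬ IsSquare s := by
  classical
  have h1 : quadraticChar F (-1) = -1 :=
    quadraticChar_neg_one_iff_not_isSquare.mpr
      (by rw [FiniteField.isSquare_neg_one_iff]; omega)
  have hcs : quadraticChar F (-s) = - quadraticChar F s := by
    rw [show (-s) = -1 * s by ring, map_mul, h1]; ring
  constructor
  · intro h hss
    have hA := (quadraticChar_one_iff_isSquare (neg_ne_zero.mpr hs)).mpr h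
    have hB := (quadraticChar_one_iff_isSquare hs).mpr hss
    rw [hcs, hB] at hA
    norm_num at hA
  · intro h
    have hA := quadraticChar_neg_one_iff_not_isSquare.mpr h
    refine (quadraticChar_one_iff_isSquare (neg_ne_zero.mpr hs)).mp ?_
    rw [hcs, hA]; ring

lemma two_ne_zero_of_card (hq : Fintype.card F % 4 = 3) : (2:F) ≠ 0 := by
  refine Ring.two_ne_zero ?_
  intro h
  have := FiniteField.even_card_iff_char_two.mp h
  omega

/-- Soundness: any member of `orbSet j` is nonzero and `j` is its index. -/
lemma orb_sound (hq : Fintype.card F % 4 = 3) {j : (F ⊕ Fin 2) × Bool} {w : Fin 3 → F}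
    (hw : w ∈ orbSet j) : w ≠ 0 ∧ j = idx w := by
  classical
  have h2 : (2:F) ≠ 0 := two_ne_zero_of_card hq
  obtain ⟨i | i, b⟩ := j
  · cases b
    · rw [mem_neg, mem_inl_true h2] at hw
      obtain ⟨hw2, hsq, heq⟩ := hw
      simp only [Pi.neg_apply, neg_ne_zero] at hw2 hsq heq
      have hns : ¬ IsSquare (w 2) := (square_or_neg hq _ hw2).mp hsq
      constructor
      · intro h; rw [h] at hw2; simp at hw2
      · simp only [idx, if_pos hw2, if_neg hns]
        have : (w 0 * w 2 - w 1 ^ 2 / 2) / w 2 ^ 2 = i := by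
          rw [div_eq_iff (pow_ne_zero 2 hw2)]
          linear_combination heq
        rw [this]
    · rw [mem_inl_true h2] at hw
      obtain ⟨hw2, hsq, heq⟩ := hw
      constructor
      · intro h; rw [h] at hw2; simp at hw2
      · simp only [idx, if_pos hw2, if_pos hsq]
        have : (w 0 * w 2 - w 1 ^ 2 / 2) / w 2 ^ 2 = i := by
          rw [div_eq_iff (pow_ne_zero 2 hw2)]; exact heq
        rw [this]
  · obtain rfl | rfl : i = 0 ∨ i = 1 := by omega
    all_goals cases b
    · rw [mem_neg, mem_inf_true] at hw
      obtain ⟨hw2, hw1, hsq⟩ := hw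
      simp only [Pi.neg_apply, neg_eq_zero, neg_ne_zero] at hw2 hw1 hsq
      have hns : ¬ IsSquare (w 1) := (square_or_neg hq _ hw1).mp hsq
      refine ⟨fun h => by rw [h] at hw1; simp at hw1, ?_⟩
      simp [idx, hw2, hw1, hns]
    · rw [mem_inf_true] at hw
      obtain ⟨hw2, hw1, hsq⟩ := hw
      refine ⟨fun h => by rw [h] at hw1; simp at hw1, ?_⟩
      simp [idx, hw2, hw1, hsq]
    · rw [mem_neg, mem_dot_true] at hw
      obtain ⟨hw2, hw1, hw0, hsq⟩ := hw
      simp only [Pi.neg_apply, neg_eq_zero, neg_ne_zero] at hw2 hw1 hw0 hsq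
      have hns : ¬ IsSquare (w 0) := (square_or_neg hq _ hw0).mp hsq
      refine ⟨fun h => by rw [h] at hw0; simp at hw0, ?_⟩
      simp [idx, hw2, hw1, hns]
    · rw [mem_dot_true] at hw
      obtain ⟨hw2, hw1, hw0, hsq⟩ := hw
      refine ⟨fun h => by rw [h] at hw0; simp at hw0, ?_⟩
      simp [idx, hw2, hw1, hsq]

/-- Completeness: any nonzero vector lies in the candidate orbit given by its index. -/
lemma orb_complete (hq : Fintype.card F % 4 = 3) {w : Fin 3 → F} (hw : w ≠ 0) :
    w ∈ orbSet (idx w) := by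
  classical
  have h2 : (2:F) ≠ 0 := two_ne_zero_of_card hq
  by_cases hw2 : w 2 ≠ 0
  · by_cases hsq : IsSquare (w 2)
    · simp only [idx, if_pos hw2, if_pos hsq]
      rw [mem_inl_true h2]
      exact ⟨hw2, hsq, (div_mul_cancel₀ _ (pow_ne_zero 2 hw2)).symm⟩
    · simp only [idx, if_pos hw2, if_neg hsq]
      rw [mem_neg, mem_inl_true h2]
      have hs' : IsSquare (-(w 2)) := (square_or_neg hq _ hw2).mpr hsq
      refine ⟨by simpa using hw2, by simpa using hs', ?_⟩
      have base : w 0 * w 2 - w 1 ^ 2 / 2 = (w 0 * w 2 - w 1 ^ 2 / 2) / w 2 ^ 2 * w 2 ^ 2 :=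
        (div_mul_cancel₀ _ (pow_ne_zero 2 hw2)).symm
      simpa [neg_mul_neg, neg_sq] using base
  · push_neg at hw2
    have hn2 : ¬ (w 2 ≠ 0) := by simp [hw2]
    by_cases hw1 : w 1 ≠ 0
    · by_cases hsq : IsSquare (w 1)
      · simp only [idx, if_neg hn2, if_pos hw1, if_pos hsq]
        rw [mem_inf_true]
        exact ⟨hw2, hw1, hsq⟩
      · simp only [idx, if_neg hn2, if_pos hw1, if_neg hsq]
        rw [mem_neg, mem_inf_true]
        exact ⟨by simpa using hw2, by simpa using hw1,
          by simpa using (square_or_neg hq _ hw1).mpr hsq⟩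
    · push_neg at hw1
      have hn1 : ¬ (w 1 ≠ 0) := by simp [hw1]
      have hw0 : w 0 ≠ 0 := by
        intro h
        apply hw
        funext j
        fin_cases j <;> simp [h, hw1, hw2]
      by_cases hsq : IsSquare (w 0)
      · simp only [idx, if_neg hn2, if_neg hn1, if_pos hsq]
        rw [mem_dot_true]
        exact ⟨hw2, hw1, hw0, hsq⟩
      · simp only [idx, if_neg hn2, if_neg hn1, if_neg hsq]
        rw [mem_neg, mem_dot_true]
        exact ⟨by simpa using hw2, by simpa using hw1, by simpa using hw0,
          by simpa using (square_or_neg hq _ hw0).mpr hsq⟩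

end Main

/-- the sets `O_i`, `-O_i` (`i ∈ F_q ∪ {∞,•}`) are pairwise
disjoint, their union is `V∖{0}`, and each is `A`-invariant (hence each is a
full `A`-orbit, being the `A`-image of a single point); so they form a complete
list of the nonzero orbits of `A` on `V = F_q³`. -/
theorem stmt_5 {F : Type*} [Field F] [Fintype F] (hq : Fintype.card F % 4 = 3) :
    (∀ j k : (F ⊕ Fin 2) × Bool, j ≠ k → orbSet j ∩ orbSet k = (∅ : Set (Fin 3 → F))) ∧
    (⋃ j : (F ⊕ Fin 2) × Bool, orbSet j) = {w : Fin 3 → F | w ≠ 0} ∧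
    (∀ j : (F ⊕ Fin 2) × Bool, ∀ a ∈ Aset F, ∀ w ∈ orbSet j, a.mulVec w ∈ orbSet j) := by
  have h2 : (2:F) ≠ 0 := two_ne_zero_of_card hq
  refine ⟨?_, ?_, ?_⟩
  · intro j k hjk
    ext w
    simp only [Set.mem_inter_iff, Set.mem_empty_iff_false, iff_false, not_and]
    intro hj hk
    exact hjk ((orb_sound hq hj).2.trans (orb_sound hq hk).2.symm)
  · ext w
    simp only [Set.mem_iUnion, Set.mem_setOf_eq]
    constructor
    · rintro ⟨j, hj⟩
      exact (orb_sound hq hj).1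
    · intro hw
      exact ⟨idx w, orb_complete hq hw⟩
  · rintro ⟨i, b⟩ a ha w ⟨a', ha', rfl⟩
    cases b <;>
      exact ⟨a * a', Aset_mul h2 ha ha', by
        simp [Matrix.mulVec_neg, Matrix.mulVec_mulVec]⟩
end

section
/- Let q ≡ 3 (mod 4), τ the canonical additive character of F_q, and z = Σ_{s ∈ (F_q^*)²} τ(s). For i, j ∈ F_q, the character sum Σ_{s ∈ (F_q^*)², x ∈ F_q} τ(s·x²/2 + s(i+j)) equals ((q-1)/2)·(1 + 2 z^{σ(2)}) if i + j = 0, and equals z^{σ(i+j)}·(1 + 2 z^{σ(2)}) if i + j ≠ 0, where z^{σ(a)} = z if a is a square in F_q^* and z^{σ(a)} = z̄ if a is a non-square. -/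
open scoped Classical

/-- `z^{σ(a)}`: equal to `z` if `a` is a square and to `z̄` otherwise. -/
noncomputable def zsig {F : Type*} [Field F] [Fintype F] (ψ : AddChar F ℂ) (a : F) : ℂ :=
  if IsSquare a then zval ψ else (starRingEnd ℂ) (zval ψ)

section Aux
variable {F : Type*} [Field F] [Fintype F]

lemma aux_isSquare_sq_mul {r : F} (hr : r ≠ 0) (b : F) :
    IsSquare (r ^ 2 * b) ↔ IsSquare b := by
  constructor
  · rintro ⟨c, hc⟩
    refine ⟨c / r, ?_⟩
    field_simp
    linear_combination hc
  · rintro ⟨c, hc⟩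
    exact ⟨r * c, by rw [hc]; ring⟩

lemma aux_neg_one_not_sq (hq : Fintype.card F % 4 = 3) : ¬ IsSquare (-1 : F) := by
  rw [FiniteField.isSquare_neg_one_iff]; simp [hq]

lemma aux_two_ne_zero (hq : Fintype.card F % 4 = 3) : (2 : F) ≠ 0 := by
  intro h
  apply aux_neg_one_not_sq hq
  have : (-1 : F) = 1 := by linear_combination -h
  rw [this]; exact ⟨1, (mul_one 1).symm⟩

/-- sum over nonzero squares of ψ(c t) when c is a nonzero square. -/
lemma aux_sum_sq_of_sq (ψ : AddChar F ℂ) {c : F} (hc : c ≠ 0) (hsq : IsSquare c) :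
    ∑ t ∈ sqFinset F, ψ (c * t) = zval ψ := by
  rw [zval]
  refine Finset.sum_nbij' (fun t => c * t) (fun u => c⁻¹ * u) ?_ ?_ ?_ ?_ ?_
  · intro t ht
    simp only [sqFinset, Finset.mem_filter, Finset.mem_univ, true_and] at ht ⊢
    exact ⟨mul_ne_zero hc ht.1, hsq.mul ht.2⟩
  · intro u hu
    simp only [sqFinset, Finset.mem_filter, Finset.mem_univ, true_and] at hu ⊢
    obtain ⟨r, hr⟩ := hsq
    have hr0 : r ≠ 0 := by rintro rfl; simp at hr; exact hc hr
    refine ⟨mul_ne_zero (inv_ne_zero hc) hu.1, ?_⟩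
    have : c⁻¹ = (r⁻¹) ^ 2 := by rw [hr]; field_simp
    rw [this]
    exact (aux_isSquare_sq_mul (inv_ne_zero hr0) u).mpr hu.2
  · intro t _; field_simp
  · intro u _; field_simp
  · intro t _; rfl

lemma aux_sum_sq (hq : Fintype.card F % 4 = 3) (ψ : AddChar F ℂ) {c : F} (hc : c ≠ 0) :
    ∑ t ∈ sqFinset F, ψ (c * t) = zsig ψ c := by
  by_cases hsq : IsSquare c
  · rw [zsig, if_pos hsq]; exact aux_sum_sq_of_sq ψ hc hsq
  · rw [zsig, if_neg hsq]
    have hnc : IsSquare (-c) := by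
      have h1 : quadraticChar F (-c) = 1 := by
        rw [show (-c : F) = -1 * c by ring, map_mul,
          quadraticChar_neg_one_iff_not_isSquare.mpr (aux_neg_one_not_sq hq),
          quadraticChar_neg_one_iff_not_isSquare.mpr hsq]
        ring
      exact (quadraticChar_one_iff_isSquare (neg_ne_zero.mpr hc)).mp h1
    have : ∀ t : F, ψ (c * t) = (starRingEnd ℂ) (ψ (-c * t)) := by
      intro t
      rw [← AddChar.map_neg_eq_conj]
      ring_nf
    rw [Finset.sum_congr rfl fun t _ => this t, ← map_sum, zval,
      aux_sum_sq_of_sq ψ (neg_ne_zero.mpr hc) hnc]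
    rfl

lemma aux_image : (Finset.univ.filter fun x : F => x ≠ 0).image (fun x => x ^ 2) = sqFinset F := by
  ext t
  simp only [Finset.mem_image, Finset.mem_filter, Finset.mem_univ, true_and, sqFinset]
  constructor
  · rintro ⟨x, hx, rfl⟩
    exact ⟨pow_ne_zero 2 hx, ⟨x, (sq x).symm ▸ sq x ▸ by ring⟩⟩
  · rintro ⟨ht0, r, hr⟩
    have hr0 : r ≠ 0 := by rintro rfl; simp at hr; exact ht0 hr
    exact ⟨r, hr0, by rw [hr]; ring⟩

lemma aux_fiber (hq : Fintype.card F % 4 = 3) {t : F} (ht : t ∈ sqFinset F) :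
    ((Finset.univ.filter fun x : F => x ≠ 0).filter fun x => x ^ 2 = t).card = 2 := by
  simp only [sqFinset, Finset.mem_filter, Finset.mem_univ, true_and] at ht
  obtain ⟨ht0, r, hr⟩ := ht
  have hr0 : r ≠ 0 := by rintro rfl; simp at hr; exact ht0 hr
  have hrsq : r ^ 2 = t := by rw [hr]; ring
  have : ((Finset.univ.filter fun x : F => x ≠ 0).filter fun x => x ^ 2 = t) = {r, -r} := by
    ext x
    simp only [Finset.mem_filter, Finset.mem_univ, true_and, Finset.mem_insert,
      Finset.mem_singleton]
    constructor
    · rintro ⟨hx0, hx⟩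
      have := sq_eq_sq_iff_eq_or_eq_neg (a := x) (b := r)
      rw [← hrsq] at hx
      exact (sq_eq_sq_iff_eq_or_eq_neg).mp hx
    · rintro (rfl | rfl)
      · exact ⟨hr0, hrsq⟩
      · exact ⟨neg_ne_zero.mpr hr0, by rw [← hrsq]; ring⟩
  rw [this, Finset.card_insert_of_notMem, Finset.card_singleton]
  simp only [Finset.mem_singleton]
  intro h
  apply aux_two_ne_zero hq
  have : r + r = 0 := by nth_rw 1 [h]; ring
  calc (2 : F) = (r + r) / r := by field_simp; ring
    _ = 0 := by rw [this, zero_div]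

lemma aux_card (hq : Fintype.card F % 4 = 3) :
    2 * (sqFinset F).card = Fintype.card F - 1 := by
  have := Finset.sum_comp (s := Finset.univ.filter fun x : F => x ≠ 0)
    (f := fun _ : F => (1 : ℕ)) (g := fun x : F => x ^ 2)
  rw [aux_image] at this
  simp only [smul_eq_mul, mul_one, Finset.sum_const] at this
  have hfib : ∀ t ∈ sqFinset F,
      ((Finset.univ.filter fun x : F => x ≠ 0).filter fun x => x ^ 2 = t).card = 2 :=
    fun t ht => aux_fiber hq ht
  rw [Finset.sum_congr rfl hfib, Finset.sum_const, smul_eq_mul] at this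
  have hcard : (Finset.univ.filter fun x : F => x ≠ 0).card = Fintype.card F - 1 := by
    rw [Finset.filter_ne', Finset.card_erase_of_mem (Finset.mem_univ 0), Finset.card_univ]
  rw [hcard] at this
  omega

lemma aux_sum_x (hq : Fintype.card F % 4 = 3) (ψ : AddChar F ℂ) {c : F} (hc : c ≠ 0) :
    ∑ x : F, ψ (c * x ^ 2) = 1 + 2 * zsig ψ c := by
  have hsplit : (Finset.univ : Finset F) = insert 0 (Finset.univ.filter fun x : F => x ≠ 0) := by
    ext x; simp [em]
  rw [hsplit, Finset.sum_insert (by simp)]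
  have : ∑ x ∈ Finset.univ.filter (fun x : F => x ≠ 0), ψ (c * x ^ 2)
      = ∑ t ∈ sqFinset F, 2 * ψ (c * t) := by
    have := Finset.sum_comp (s := Finset.univ.filter fun x : F => x ≠ 0)
      (f := fun t : F => ψ (c * t)) (g := fun x : F => x ^ 2)
    rw [aux_image] at this
    rw [this]
    refine Finset.sum_congr rfl fun t ht => ?_
    rw [aux_fiber hq ht]
    simp [two_smul, two_mul]
  rw [this, ← Finset.mul_sum, aux_sum_sq hq ψ hc]
  simp

end Aux

/-- for `q ≡ 3 (mod 4)` and the canonical additive character `τ`,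
`Σ_{s ∈ (F_q^*)², x ∈ F_q} τ(s·x²/2 + s(i+j))` equals
`((q-1)/2)(1 + 2 z^{σ(2)})` if `i + j = 0`, and `z^{σ(i+j)}(1 + 2 z^{σ(2)})`
if `i + j ≠ 0`. -/
theorem stmt_6 {F : Type*} [Field F] [Fintype F]
    (hq : Fintype.card F % 4 = 3) (ψ : AddChar F ℂ) (hψ : ψ ≠ 1) (i j : F) :
    (i + j = 0 →
      ∑ s ∈ sqFinset F, ∑ x : F, ψ (s * x ^ 2 / 2 + s * (i + j)) =
        (((Fintype.card F : ℂ) - 1) / 2) * (1 + 2 * zsig ψ 2)) ∧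
    (i + j ≠ 0 →
      ∑ s ∈ sqFinset F, ∑ x : F, ψ (s * x ^ 2 / 2 + s * (i + j)) =
        zsig ψ (i + j) * (1 + 2 * zsig ψ 2)) := by
  have h2 : (2 : F) ≠ 0 := aux_two_ne_zero hq
  set w := i + j with hw
  have key : ∀ s ∈ sqFinset F, ∑ x : F, ψ (s * x ^ 2 / 2 + s * w) =
      ψ (s * w) * (1 + 2 * zsig ψ 2) := by
    intro s hs
    simp only [sqFinset, Finset.mem_filter, Finset.mem_univ, true_and] at hs
    obtain ⟨hs0, r, hr⟩ := hs
    have hr0 : r ≠ 0 := by rintro rfl; simp at hr; exact hs0 hr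
    have hsd : (s / 2 : F) ≠ 0 := div_ne_zero hs0 h2
    have hterm : ∀ x : F, ψ (s * x ^ 2 / 2 + s * w) = ψ (s * w) * ψ (s / 2 * x ^ 2) := by
      intro x
      rw [show s * x ^ 2 / 2 + s * w = s * w + s / 2 * x ^ 2 by ring, AddChar.map_add_eq_mul]
    rw [Finset.sum_congr rfl fun x _ => hterm x, ← Finset.mul_sum, aux_sum_x hq ψ hsd]
    have hiff : IsSquare (s / 2 : F) ↔ IsSquare (2 : F) := by
      have e1 : (s / 2 : F) = r ^ 2 * (2 : F)⁻¹ := by rw [hr]; field_simp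
      have e2 : ((2 : F)⁻¹) = ((2 : F)⁻¹) ^ 2 * 2 := by
        rw [sq, mul_assoc, inv_mul_cancel₀ h2, mul_one]
      rw [e1, aux_isSquare_sq_mul hr0, e2, aux_isSquare_sq_mul (inv_ne_zero h2)]
    have : zsig ψ (s / 2) = zsig ψ 2 := by
      rw [zsig, zsig]
      by_cases hc : IsSquare (2 : F)
      · rw [if_pos hc, if_pos (hiff.mpr hc)]
      · rw [if_neg hc, if_neg (fun h => hc (hiff.mp h))]
    rw [this]
  rw [Finset.sum_congr rfl key]
  constructor
  · intro h0
    rw [h0]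
    have hcast : ((sqFinset F).card : ℂ) = ((Fintype.card F : ℂ) - 1) / 2 := by
      have h := aux_card (F := F) hq
      have h1 : 1 ≤ Fintype.card F := Fintype.card_pos
      have h2c : (2 : ℂ) * ((sqFinset F).card : ℂ) = (Fintype.card F : ℂ) - 1 := by
        have hn := congrArg (fun n : ℕ => (n : ℂ)) h
        push_cast [Nat.cast_sub h1] at hn
        exact hn
      rw [eq_div_iff (two_ne_zero : (2 : ℂ) ≠ 0)]
      linear_combination h2c
    simp only [mul_zero, AddChar.map_zero_eq_one, one_mul, Finset.sum_const, nsmul_eq_mul]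
    rw [hcast]
  · intro hne
    have : ∀ s ∈ sqFinset F, ψ (s * w) * (1 + 2 * zsig ψ 2)
        = ψ (w * s) * (1 + 2 * zsig ψ 2) := by
      intro s _; rw [mul_comm s w]
    rw [Finset.sum_congr rfl this, ← Finset.sum_mul, aux_sum_sq hq ψ hne]
end

section
/- Let q ≡ 3 (mod 4), V = F_q³, and E ≤ GL₃(F_q) the group of matrices E(x) (x ∈ F_q) that are unitriangular with superdiagonal entries (x, x) and corner entry x²/2. Every element N of GL(V) (as F_p-linear automorphisms of V) normalizing E is an upper triangular block matrix of the form: N acts preserving the subspaces C_V(E) = {(x,0,0)ᵗ} and [E,V] = {(x,y,0)ᵗ}, and N lies in the group F·K·L·E, where F consists of coordinatewise Galois automorphisms f ∈ Gal(F_q/F_p), K = {diag(α, αβ, αβ²) : α, β ∈ F_q^*}, and L = {I + ℓ·e₁₃ : ℓ ∈ End_{F_p}(F_q)}. That is, N_{Aut(V)}(E) = FKLE. -/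
namespace Stmt13Aux

variable {F : Type*} [Field F]

lemma emul (x : F) (v : Fin 3 → F) :
    (Emat x).mulVec v = ![v 0 + x * v 1 + x ^ 2 / 2 * v 2, v 1 + x * v 2, v 2] := by
  funext i
  fin_cases i <;> simp [Emat, Matrix.mulVec, dotProduct, Fin.sum_univ_three]

lemma vec_eta (v : Fin 3 → F) : v = ![v 0, v 1, v 2] := by
  funext i; fin_cases i <;> rfl

lemma addv (a b c a' b' c' : F) : ![a,b,c] + ![a',b',c'] = ![a+a',b+b',c+c'] := by
  funext i; fin_cases i <;> simp

lemma negv (a b c : F) : -(![a,b,c]) = ![-a,-b,-c] := by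
  funext i; fin_cases i <;> simp

lemma zerov : (0 : Fin 3 → F) = ![0,0,0] := by
  funext i; fin_cases i <;> rfl

lemma rev_comm (h2 : (2:F) ≠ 0) (g : AddAut (Fin 3 → F)) (e : F ≃+* F) (α β : F) (l : F →+ F)
    (x : F) (hβ : β ≠ 0)
    (hform : ∀ v : Fin 3 → F,
        g v = ![e (α * ((Emat x).mulVec v 0 + l ((Emat x).mulVec v 2))),
                e (α * β * ((Emat x).mulVec v 1)),
                e (α * β ^ 2 * ((Emat x).mulVec v 2))]) :
    ∀ a v, g ((Emat a).mulVec v) = (Emat (e (a / β))).mulVec (g v) := by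
  intro a v
  rw [hform ((Emat a).mulVec v), hform v]
  simp only [emul]
  simp only [Matrix.cons_val_zero, Matrix.cons_val_one, Matrix.head_cons,
    Matrix.cons_val_two, Matrix.tail_cons]
  have heβ : e β ≠ 0 := fun h => hβ (by simpa using e.injective (h.trans (map_zero e).symm))
  funext i
  fin_cases i <;>
    simp only [Matrix.cons_val_zero, Matrix.cons_val_one, Matrix.head_cons,
      Matrix.cons_val_two, Matrix.tail_cons, map_add, map_mul, map_div₀, map_pow,
      map_ofNat] <;>
    field_simp <;> ring

end Stmt13Aux

open Stmt13Aux in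
/-- an `F_p`-linear automorphism `g` of `V = F_q³` (equivalently,
since `F_p` is the prime field, an automorphism of the additive group `V`)
normalizes `E = {E(x)}` if and only if `g ∈ F·K·L·E`, i.e. `g` is a composition
(applied right to left) of some `E(x)`, an `L`-element `(u₁,u₂,u₃) ↦
(u₁ + ℓ(u₃), u₂, u₃)` with `ℓ` `F_p`-linear, a `K`-element
`diag(α, αβ, αβ²)` with `α, β ∈ F_q^*`, and a coordinatewise Galois
automorphism `f ∈ Gal(F_q/F_p)`. -/
theorem stmt_13 {F : Type*} [Field F] [Fintype F] (p : ℕ) [Fact p.Prime] [CharP F p]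
    (hp : p ≠ 2) (g : AddAut (Fin 3 → F)) :
    ((∀ x : F, ∃ y : F, ∀ v : Fin 3 → F,
        g ((Emat x).mulVec ((-g) v)) = (Emat y).mulVec v) ∧
     (∀ x : F, ∃ y : F, ∀ v : Fin 3 → F,
        (-g) ((Emat x).mulVec (g v)) = (Emat y).mulVec v))
    ↔
    ∃ (f : F ≃+* F) (α β : F) (l : F →+ F) (x : F), α ≠ 0 ∧ β ≠ 0 ∧
      ∀ v : Fin 3 → F,
        g v = ![f (α * ((Emat x).mulVec v 0 + l ((Emat x).mulVec v 2))),
                f (α * β * ((Emat x).mulVec v 1)),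
                f (α * β ^ 2 * ((Emat x).mulVec v 2))] := by
  have h2ne : (2:F) ≠ 0 := by
    intro h
    have hd : p ∣ 2 := (CharP.cast_eq_zero_iff F p 2).mp (by exact_mod_cast h)
    exact hp ((Nat.prime_dvd_prime_iff_eq Fact.out Nat.prime_two).mp hd)
  have hgi : ∀ v, g ((-g) v) = v := fun v => by simp [AddAut.neg_def]
  have hig : ∀ v, (-g) (g v) = v := fun v => by simp [AddAut.neg_def]
  constructor
  · rintro ⟨h1, h2c⟩
    choose y hy using h1
    choose y' hy' using h2c
    have hE : ∀ x v, g ((Emat x).mulVec v) = (Emat (y x)).mulVec (g v) := by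
      intro x v; have h := hy x (g v); rwa [hig] at h
    have hE' : ∀ x v, (-g) ((Emat x).mulVec v) = (Emat (y' x)).mulVec ((-g) v) := by
      intro x v; have h := hy' x ((-g) v); rwa [hgi] at h
    have hyy' : ∀ s, y (y' s) = s := by
      intro s
      have ha := hy' s ((-g) ![(0:F),1,0])
      rw [hgi] at ha
      have hb := congrArg (⇑g) ha
      rw [hgi, hy (y' s) ![(0:F),1,0]] at hb
      have hc := congrFun hb 0
      simp [emul] at hc
      exact hc.symm
    have hy'y : ∀ s, y' (y s) = s := by
      intro s
      have ha := hE s ![(0:F),1,0]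
      have hb := hy' (y s) ![(0:F),1,0]
      rw [← ha, hig] at hb
      have hc := congrFun hb 0
      simp [emul] at hc
      exact hc.symm
    -- third component is preserved by conjugation-type relation
    have comm2 : ∀ x u, g ((Emat x).mulVec u) 2 = g u 2 := by
      intro x u
      have h := congrFun (hE x u) 2
      rw [emul (y x) (g u)] at h
      simpa using h
    have comm2' : ∀ x u, (-g) ((Emat x).mulVec u) 2 = (-g) u 2 := by
      intro x u
      have h := congrFun (hE' x u) 2
      rw [emul (y' x) ((-g) u)] at h
      simpa using h
    have hW : ∀ a b : F, g ![a, b, 0] 2 = 0 := by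
      intro a b
      have hd : ![a,b,0] = (Emat 1).mulVec ![0, a - b/2, b] - ![0, a - b/2, b] := by
        rw [emul]; funext i; fin_cases i <;> simp <;> ring
      rw [hd, map_sub]
      show g ((Emat 1).mulVec ![0, a - b/2, b]) 2 - g ![0, a - b/2, b] 2 = 0
      rw [comm2, sub_self]
    have hW' : ∀ a b : F, (-g) ![a, b, 0] 2 = 0 := by
      intro a b
      have hd : ![a,b,0] = (Emat 1).mulVec ![0, a - b/2, b] - ![0, a - b/2, b] := by
        rw [emul]; funext i; fin_cases i <;> simp <;> ring
      rw [hd, map_sub]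
      show (-g) ((Emat 1).mulVec ![0, a - b/2, b]) 2 - (-g) ![0, a - b/2, b] 2 = 0
      rw [comm2', sub_self]
    have hCpres : ∀ t : F, g ![t,0,0] = ![g ![t,0,0] 0, 0, 0] := by
      intro t
      have hfix : (Emat (y' 1)).mulVec ![t,0,0] = ![t,0,0] := by
        rw [emul]; funext i; fin_cases i <;> simp
      have h := hE (y' 1) ![t,0,0]
      rw [hfix, hyy', emul] at h
      have h1 := congrFun h 1
      have h0 := congrFun h 0
      simp only [Matrix.cons_val_zero, Matrix.cons_val_one, Matrix.cons_val_two,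
        Matrix.head_cons, Matrix.tail_cons] at h0 h1
      have h2' : g ![t,0,0] 2 = 0 := by linear_combination -h1
      funext i; fin_cases i
      · rfl
      · show g ![t,0,0] 1 = 0
        linear_combination -h0 - (1/2) * h2'
      · exact h2'
    obtain ⟨A, hA⟩ : ∃ A : F → F, ∀ t, g ![t,0,0] = ![A t, 0, 0] :=
      ⟨fun t => g ![t,0,0] 0, fun t => hCpres t⟩
    obtain ⟨B0, B1, hB⟩ : ∃ B0 B1 : F → F, ∀ t : F, g ![0,t,0] = ![B0 t, B1 t, 0] := by
      refine ⟨fun t => g ![0,t,0] 0, fun t => g ![0,t,0] 1, fun t => ?_⟩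
      funext i; fin_cases i
      · rfl
      · rfl
      · exact hW 0 t
    obtain ⟨C0, C1, C2, hC⟩ : ∃ C0 C1 C2 : F → F, ∀ t : F, g ![0,0,t] = ![C0 t, C1 t, C2 t] :=
      ⟨fun t => g ![0,0,t] 0, fun t => g ![0,0,t] 1, fun t => g ![0,0,t] 2,
        fun t => vec_eta _⟩
    -- splitting lemma
    have gsplit : ∀ a b c : F, g ![a,b,c] = ![A a + B0 b + C0 c, B1 b + C1 c, C2 c] := by
      intro a b c
      have hs : (![a,b,c] : Fin 3 → F) = ![a,0,0] + (![0,b,0] + ![0,0,c]) := by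
        funext i; fin_cases i <;> simp
      rw [hs, map_add, map_add, hA, hB, hC]
      funext i; fin_cases i <;> simp [add_assoc]
    -- zeros
    have hgz : g ![(0:F),0,0] = ![(0:F),0,0] := by rw [← zerov, map_zero]
    have hA0 : A 0 = 0 := by
      have := (hA 0).symm.trans hgz; exact congrFun this 0
    have hB00 : B0 0 = 0 := by
      have := (hB 0).symm.trans hgz; exact congrFun this 0
    have hB10 : B1 0 = 0 := by
      have := (hB 0).symm.trans hgz; exact congrFun this 1
    have hC00 : C0 0 = 0 := by
      have := (hC 0).symm.trans hgz; exact congrFun this 0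
    have hC10 : C1 0 = 0 := by
      have := (hC 0).symm.trans hgz; exact congrFun this 1
    have hC20 : C2 0 = 0 := by
      have := (hC 0).symm.trans hgz; exact congrFun this 2
    -- additivity
    have hAadd : ∀ s t : F, A (s+t) = A s + A t := by
      intro s t
      have h : g ![s+t,0,0] = g ![s,0,0] + g ![t,0,0] := by
        rw [← map_add, addv]; norm_num
      rw [hA, hA, hA, addv] at h
      exact congrFun h 0
    have hC0add : ∀ s t : F, C0 (s+t) = C0 s + C0 t := by
      intro s t
      have h : g ![0,0,s+t] = g ![0,0,s] + g ![0,0,t] := by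
        rw [← map_add, addv]; norm_num
      rw [hC, hC, hC, addv] at h
      exact congrFun h 0
    have hAneg : ∀ t : F, A (-t) = - A t := by
      intro t
      have h : g ![-t,0,0] = - g ![t,0,0] := by
        rw [← map_neg, negv]; norm_num
      rw [hA, hA, negv] at h
      exact congrFun h 0
    have hB0neg : ∀ t : F, B0 (-t) = - B0 t := by
      intro t
      have h : g ![0,-t,0] = - g ![0,t,0] := by
        rw [← map_neg, negv]; norm_num
      rw [hB, hB, negv] at h
      exact congrFun h 0
    -- the master functional equations
    have eq2 : ∀ x b : F, A (x*b) = y x * B1 b := by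
      intro x b
      have hv : (Emat x).mulVec ![0,b,0] = ![x*b, b, 0] := by
        rw [emul]; funext i; fin_cases i <;> simp
      have h := hE x ![0,b,0]
      rw [hv, gsplit (x*b) b 0, hB, emul] at h
      have h0 := congrFun h 0
      simp only [Matrix.cons_val_zero, Matrix.cons_val_one, Matrix.cons_val_two,
        Matrix.head_cons, Matrix.tail_cons] at h0
      linear_combination h0 - hC00
    have eq13 : ∀ x c : F, (B1 (x*c) = y x * C2 c) ∧
        (A (x^2/2*c) + B0 (x*c) = y x * C1 c + (y x)^2/2 * C2 c) := by
      intro x c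
      have hv : (Emat x).mulVec ![0,0,c] = ![x^2/2*c, x*c, c] := by
        rw [emul]; funext i; fin_cases i <;> simp
      have h := hE x ![0,0,c]
      rw [hv, gsplit (x^2/2*c) (x*c) c, hC, emul] at h
      have h0 := congrFun h 0
      have h1 := congrFun h 1
      simp only [Matrix.cons_val_zero, Matrix.cons_val_one, Matrix.cons_val_two,
        Matrix.head_cons, Matrix.tail_cons] at h0 h1
      constructor
      · linear_combination h1
      · linear_combination h0
    have eq1 : ∀ x c : F, B1 (x*c) = y x * C2 c := fun x c => (eq13 x c).1
    have eq3 : ∀ x c : F, A (x^2/2*c) + B0 (x*c) = y x * C1 c + (y x)^2/2 * C2 c :=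
      fun x c => (eq13 x c).2
    -- nonvanishing
    have hA1 : A 1 ≠ 0 := by
      intro h
      have h' := hA 1
      rw [h] at h'
      have hb := congrArg (⇑(-g)) h'
      rw [hig, ← zerov, map_zero] at hb
      have := congrFun hb 0
      simp at this
    have hAy : ∀ t : F, A t = y t * B1 1 := by
      intro t; have := eq2 t 1; rwa [mul_one] at this
    have hb1 : B1 1 ≠ 0 := by
      intro h; apply hA1; rw [hAy 1, h, mul_zero]
    have hmu : y 1 ≠ 0 := by
      intro h; apply hA1; rw [hAy 1, h, zero_mul]
    have hc2 : C2 1 ≠ 0 := by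
      intro h
      have h' := hC 1
      rw [h] at h'
      have hb := congrArg (⇑(-g)) h'
      rw [hig] at hb
      have h2 := congrFun hb 2
      rw [hW' (C0 1) (C1 1)] at h2
      simp at h2
    -- y is additive, odd, multiplicative-up-to-μ
    have hyadd : ∀ s t : F, y (s+t) = y s + y t := by
      intro s t
      have h : y (s+t) * B1 1 = (y s + y t) * B1 1 := by
        rw [← hAy, hAadd, hAy, hAy]; ring
      exact mul_right_cancel₀ hb1 h
    have hyneg : ∀ t : F, y (-t) = - y t := by
      intro t
      have h : y (-t) * B1 1 = (- y t) * B1 1 := by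
        rw [← hAy, hAneg, hAy]; ring
      exact mul_right_cancel₀ hb1 h
    have hy0 : y 0 = 0 := by
      have h : y 0 * B1 1 = 0 * B1 1 := by rw [← hAy, hA0, zero_mul]
      exact mul_right_cancel₀ hb1 h
    have eq5 : ∀ x c : F, B0 (x*c) = y x * C1 c := by
      intro x c
      have h1 := eq3 x c
      have h2 := eq3 (-x) c
      rw [show (-x)^2/2*c = x^2/2*c by ring, show (-x)*c = -(x*c) by ring,
        hB0neg, hyneg] at h2
      have hh : 2 * B0 (x*c) = 2 * (y x * C1 c) := by linear_combination h1 - h2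
      exact mul_left_cancel₀ h2ne hh
    -- basic semilinearity relations
    have hB1y : ∀ t : F, B1 t = y t * C2 1 := by
      intro t; have := eq1 t 1; rwa [mul_one] at this
    have hB0y : ∀ t : F, B0 t = y t * C1 1 := by
      intro t; have := eq5 t 1; rwa [mul_one] at this
    have hC2y : ∀ t : F, B1 t = y 1 * C2 t := by
      intro t; have := eq1 1 t; rwa [one_mul] at this
    have hC1y : ∀ t : F, B0 t = y 1 * C1 t := by
      intro t; have := eq5 1 t; rwa [one_mul] at this
    have hymul : ∀ s t : F, y (s*t) * y 1 = y s * y t := by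
      intro s t
      have h1 := eq1 s t
      have h2 := hB1y (s*t)
      have h3 := hC2y t
      have h4 := hB1y t
      have h : (y (s*t) * y 1) * C2 1 = (y s * y t) * C2 1 := by
        linear_combination y 1 * h1 - y 1 * h2 - y s * h3 + y s * h4
      exact mul_right_cancel₀ hc2 h
    -- the field automorphism
    let e0 : F →+* F :=
      { toFun := fun t => y t * (y 1)⁻¹
        map_one' := mul_inv_cancel₀ hmu
        map_zero' := by show y 0 * (y 1)⁻¹ = 0; rw [hy0, zero_mul]
        map_add' := fun s t => by
          show y (s+t) * (y 1)⁻¹ = y s * (y 1)⁻¹ + y t * (y 1)⁻¹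
          rw [hyadd]; ring
        map_mul' := fun s t => by
          show y (s*t) * (y 1)⁻¹ = (y s * (y 1)⁻¹) * (y t * (y 1)⁻¹)
          have h := hymul s t
          field_simp
          linear_combination h }
    have he0 : ∀ t, e0 t = y t * (y 1)⁻¹ := fun t => rfl
    have hsurj : Function.Surjective e0 := by
      intro s
      refine ⟨y' (s * y 1), ?_⟩
      rw [he0, hyy']
      field_simp
    let e : F ≃+* F := RingEquiv.ofBijective e0 ⟨e0.injective, hsurj⟩
    have he : ∀ t, e t = y t * (y 1)⁻¹ := fun t => rfl
    have hesymm : ∀ t, e (e.symm t) = t := fun t => e.apply_symm_apply t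
    -- witnesses
    obtain ⟨α, hαdef⟩ : ∃ α : F, α = e.symm (A 1) := ⟨_, rfl⟩
    obtain ⟨β, hβdef⟩ : ∃ β : F, β = e.symm (B1 1 / A 1) := ⟨_, rfl⟩
    obtain ⟨x0, hx0def⟩ : ∃ x0 : F, x0 = e.symm (y 1 * C1 1 / A 1) := ⟨_, rfl⟩
    have heα : e α = A 1 := by rw [hαdef]; exact hesymm _
    have heβ : e β = B1 1 / A 1 := by rw [hβdef]; exact hesymm _
    have hex : e x0 = y 1 * C1 1 / A 1 := by rw [hx0def]; exact hesymm _
    have hα : α ≠ 0 := by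
      intro h
      apply hA1
      rw [← heα, h, map_zero]
    have hβne : β ≠ 0 := by
      intro h
      have : B1 1 / A 1 = 0 := by rw [← heβ, h, map_zero]
      exact (div_ne_zero hb1 hA1) this
    let L : F →+ F :=
      { toFun := fun t => e.symm (C0 t) * α⁻¹ - x0^2/2*t
        map_zero' := by
          show e.symm (C0 0) * α⁻¹ - x0^2/2*0 = 0
          rw [hC00, map_zero]; ring
        map_add' := fun s t => by
          show e.symm (C0 (s+t)) * α⁻¹ - x0^2/2*(s+t)
            = (e.symm (C0 s) * α⁻¹ - x0^2/2*s) + (e.symm (C0 t) * α⁻¹ - x0^2/2*t)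
          rw [hC0add, map_add]; ring }
    have hL : ∀ t, L t = e.symm (C0 t) * α⁻¹ - x0^2/2*t := fun t => rfl
    refine ⟨e, α, β, L, x0, hα, hβne, ?_⟩
    intro v
    conv_lhs => rw [vec_eta v, gsplit]
    rw [emul x0 v]
    simp only [Matrix.cons_val_zero, Matrix.cons_val_one, Matrix.cons_val_two,
      Matrix.head_cons, Matrix.tail_cons]
    rw [hL]
    -- derived semilinearity of C1, C2
    have hC1v : ∀ t : F, y 1 * C1 t = y t * C1 1 := fun t => by
      rw [← hC1y, hB0y]
    have hC2v : ∀ t : F, y 1 * C2 t = y t * C2 1 := fun t => by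
      rw [← hC2y, hB1y]
    funext i; fin_cases i
    · show A (v 0) + B0 (v 1) + C0 (v 2) =
        e (α * (v 0 + x0 * v 1 + x0^2/2 * v 2 + (e.symm (C0 (v 2)) * α⁻¹ - x0^2/2 * v 2)))
      have harg : α * (v 0 + x0 * v 1 + x0^2/2 * v 2 + (e.symm (C0 (v 2)) * α⁻¹ - x0^2/2 * v 2))
          = α * v 0 + α * x0 * v 1 + e.symm (C0 (v 2)) := by
        field_simp
        ring
      rw [harg]
      simp only [map_add, map_mul]
      simp only [hesymm, heα, hex]
      simp only [he]
      rw [hAy (v 0), hB0y (v 1), hAy 1]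
      field_simp
    · show B1 (v 1) + C1 (v 2) = e (α * β * (v 1 + x0 * v 2))
      simp only [map_add, map_mul]
      simp only [heα, heβ, hex]
      simp only [he]
      have h1 := hC1v (v 2)
      rw [hB1y (v 1), hAy 1]
      field_simp
      linear_combination h1 - y (v 1) * (hB1y 1)
    · show C2 (v 2) = e (α * β^2 * v 2)
      simp only [map_mul, map_pow]
      simp only [heα, heβ]
      simp only [he]
      have h2 := hC2v (v 2)
      rw [hAy 1, hB1y 1]
      field_simp
      linear_combination h2
  · rintro ⟨e, α, β, l, x, hα, hβ, hform⟩
    have hc := rev_comm h2ne g e α β l x hβ hform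
    constructor
    · intro x'
      exact ⟨e (x' / β), fun v => by rw [hc x' ((-g) v), hgi]⟩
    · intro x'
      refine ⟨β * e.symm x', fun v => ?_⟩
      have h := hc (β * e.symm x') v
      rw [mul_div_cancel_left₀ _ hβ, e.apply_symm_apply] at h
      rw [← h, hig]
end

section
/- Let q = pⁿ, p an odd prime, V = F_q³ (additive group), V_+ ≤ Sym(V) the group of translations, and E ≤ GL₃(F_q) the group of matrices E(x) as above, so EV_+ is a p-group of order q⁴ acting on V. Every elementary abelian subgroup of EV_+ of order ≥ q²·p is contained in V_+. In particular, the Thompson subgroup E(EV_+) (generated by elementary abelian subgroups of maximal order) equals V_+. -/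
def EVset (F : Type*) [Field F] : Set (Equiv.Perm (Fin 3 → F)) :=
  {g | ∃ x : F, ∃ w : Fin 3 → F, ∀ v, g v = (Emat x).mulVec v + w}

def transSet (F : Type*) [Field F] : Set (Equiv.Perm (Fin 3 → F)) :=
  {g | ∃ w : Fin 3 → F, ∀ v, g v = v + w}

namespace Stmt14

variable {F : Type*} [Field F]

lemma emat_mulVec (x : F) (v : Fin 3 → F) :
    (Emat x).mulVec v = ![v 0 + x * v 1 + x ^ 2 / 2 * v 2, v 1 + x * v 2, v 2] := by
  funext i
  fin_cases i <;>
    simp [Emat, Matrix.mulVec, dotProduct, Fin.sum_univ_three] <;> ring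

lemma emat_zero_mulVec (v : Fin 3 → F) : (Emat (0 : F)).mulVec v = v := by
  rw [emat_mulVec]; funext i; fin_cases i <;> simp

def xpart (g : Equiv.Perm (Fin 3 → F)) : F :=
  g ![0, 1, 0] 0 - g 0 0

lemma xpart_eq {g : Equiv.Perm (Fin 3 → F)} {x : F} {w : Fin 3 → F}
    (h : ∀ v, g v = (Emat x).mulVec v + w) : xpart g = x := by
  have h1 := h ![0, 1, 0]
  have h2 := h (0 : Fin 3 → F)
  simp [xpart, h1, h2, emat_mulVec]

lemma fixed_coords {x : F} (hx : x ≠ 0) {d : Fin 3 → F}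
    (hd : (Emat x).mulVec d = d) : d 1 = 0 ∧ d 2 = 0 := by
  rw [emat_mulVec] at hd
  have h1 := congrFun hd 1
  have h0 := congrFun hd 0
  simp only [Matrix.cons_val_zero, Matrix.cons_val_one, Matrix.head_cons] at h1 h0
  have hd2 : d 2 = 0 := by
    rcases mul_eq_zero.1 (show x * d 2 = 0 by linear_combination h1) with h | h
    · exact absurd h hx
    · exact h
  rw [hd2] at h0
  have hd1 : d 1 = 0 := by
    rcases mul_eq_zero.1 (show x * d 1 = 0 by linear_combination h0) with h | h
    · exact absurd h hx
    · exact h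
  exact ⟨hd1, hd2⟩

lemma trans_of_xpart {g : Equiv.Perm (Fin 3 → F)} (hg : g ∈ EVset F)
    (h0 : xpart g = 0) : g ∈ transSet F := by
  obtain ⟨x, w, h⟩ := hg
  have hx : x = 0 := by rw [← xpart_eq h, h0]
  subst hx
  exact ⟨w, fun v => by rw [h v, emat_zero_mulVec]⟩

lemma card_le_sq [Fintype F] (T : Subgroup (Equiv.Perm (Fin 3 → F)))
    (hT : (T : Set (Equiv.Perm (Fin 3 → F))) ⊆ EVset F)
    (hcomm : ∀ a ∈ T, ∀ b ∈ T, a * b = b * a)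
    {g : Equiv.Perm (Fin 3 → F)} (hg : g ∈ T) (hx : xpart g ≠ 0) :
    Nat.card T ≤ Fintype.card F ^ 2 := by
  obtain ⟨x, w, hgw⟩ := hT hg
  have hxg : xpart g = x := xpart_eq hgw
  rw [hxg] at hx
  -- commutation relation
  have key : ∀ t ∈ T, ∀ y : F, ∀ u : Fin 3 → F,
      (∀ v, t v = (Emat y).mulVec v + u) →
      (Emat x).mulVec u + w = (Emat y).mulVec w + u := by
    intro t ht y u htu
    have hc := Equiv.ext_iff.1 (hcomm g hg t ht) 0
    rw [Equiv.Perm.mul_apply, Equiv.Perm.mul_apply] at hc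
    have ht0 : t 0 = u := by rw [htu 0, Matrix.mulVec_zero, zero_add]
    have hg0 : g 0 = w := by rw [hgw 0, Matrix.mulVec_zero, zero_add]
    rw [ht0, hg0, hgw u, htu w] at hc
    exact hc
  have hinj : Function.Injective
      (fun t : T => (xpart (t : Equiv.Perm (Fin 3 → F)),
        (t : Equiv.Perm (Fin 3 → F)) 0 0)) := by
    rintro ⟨t, ht⟩ ⟨t', ht'⟩ hEq
    simp only [Prod.mk.injEq] at hEq
    obtain ⟨hxEq, h0Eq⟩ := hEq
    obtain ⟨y, u, htu⟩ := hT ht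
    obtain ⟨y', u', htu'⟩ := hT ht'
    have hy : y = y' := by rw [← xpart_eq htu, ← xpart_eq htu', hxEq]
    subst hy
    have e1 := key t ht y u htu
    have e2 := key t' ht' y u' htu'
    have hsub : (Emat x).mulVec (u - u') = u - u' := by
      rw [Matrix.mulVec_sub]
      linear_combination (norm := abel) e1 - e2
    obtain ⟨h1, h2⟩ := fixed_coords hx hsub
    have ht00 : t 0 = u := by rw [htu 0, Matrix.mulVec_zero, zero_add]
    have ht00' : t' 0 = u' := by rw [htu' 0, Matrix.mulVec_zero, zero_add]
    have h0 : u 0 = u' 0 := by rw [← ht00, ← ht00']; exact h0Eq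
    have huu : u = u' := by
      funext i
      fin_cases i
      · exact h0
      · simpa [sub_eq_zero] using h1
      · simpa [sub_eq_zero] using h2
    have : t = t' := Equiv.ext fun v => by rw [htu v, htu' v, huu]
    exact Subtype.ext this
  calc Nat.card T ≤ Nat.card (F × F) := Nat.card_le_card_of_injective _ hinj
    _ = Fintype.card F ^ 2 := by
        rw [Nat.card_eq_fintype_card, Fintype.card_prod, sq]

lemma part1 [Fintype F] {p : ℕ} (hp2 : 2 ≤ p)
    (T : Subgroup (Equiv.Perm (Fin 3 → F)))
    (hT : (T : Set (Equiv.Perm (Fin 3 → F))) ⊆ EVset F)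
    (hcomm : ∀ a ∈ T, ∀ b ∈ T, a * b = b * a)
    (hcard : Fintype.card F ^ 2 * p ≤ Nat.card T) :
    (T : Set (Equiv.Perm (Fin 3 → F))) ⊆ transSet F := by
  intro t ht
  refine trans_of_xpart (hT ht) ?_
  by_contra hx
  have hle := card_le_sq T hT hcomm ht hx
  have hq : 1 ≤ Fintype.card F ^ 2 := Nat.one_le_iff_ne_zero.2 (by positivity)
  nlinarith [hcard, hle]

def Vsub (F : Type*) [Field F] : Subgroup (Equiv.Perm (Fin 3 → F)) where
  carrier := transSet F
  one_mem' := ⟨0, fun v => by simp⟩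
  mul_mem' := by
    rintro a b ⟨w, hw⟩ ⟨u, hu⟩
    exact ⟨u + w, fun v => by rw [Equiv.Perm.mul_apply, hu, hw, add_assoc]⟩
  inv_mem' := by
    rintro a ⟨w, hw⟩
    refine ⟨-w, fun v => a.injective ?_⟩
    rw [show a (a⁻¹ v) = v from Equiv.apply_symm_apply a v, hw]
    abel

lemma mem_vsub_iff {g : Equiv.Perm (Fin 3 → F)} :
    g ∈ Vsub F ↔ g ∈ transSet F := Iff.rfl

lemma vsub_card [Fintype F] : Nat.card (Vsub F) = Fintype.card F ^ 3 := by
  have e : (Fin 3 → F) ≃ (Vsub F) :=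
    { toFun := fun w => ⟨Equiv.addRight w, w, fun v => rfl⟩
      invFun := fun g => (g : Equiv.Perm (Fin 3 → F)) 0
      left_inv := fun w => by simp
      right_inv := by
        rintro ⟨g, w, hw⟩
        refine Subtype.ext (Equiv.ext fun v => ?_)
        have h0 : g 0 = w := by rw [hw 0, zero_add]
        simp [h0, hw v] }
  rw [← Nat.card_congr e, Nat.card_eq_fintype_card]
  simp [Fintype.card_fun]

lemma vsub_subset_EV : ((Vsub F : Subgroup _) : Set (Equiv.Perm (Fin 3 → F))) ⊆ EVset F := by
  rintro g ⟨w, hw⟩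
  exact ⟨0, w, fun v => by rw [hw v, emat_zero_mulVec]⟩

lemma vsub_comm : ∀ a ∈ Vsub F, ∀ b ∈ Vsub F, a * b = b * a := by
  rintro a ⟨w, hw⟩ b ⟨u, hu⟩
  refine Equiv.ext fun v => ?_
  rw [Equiv.Perm.mul_apply, Equiv.Perm.mul_apply, hu, hw, hw, hu]
  abel

lemma vsub_exp (p : ℕ) [CharP F p] : ∀ a ∈ Vsub F, a ^ p = 1 := by
  rintro a ⟨w, hw⟩
  have ha : a = Equiv.addRight w := Equiv.ext fun v => by rw [hw v]; rfl
  rw [ha, show ∀ n : ℕ, (Equiv.addRight w : Equiv.Perm (Fin 3 → F)) ^ n =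
      Equiv.addRight (n • w) from fun n => by
    induction n with
    | zero => ext; simp
    | succ k ih =>
      rw [pow_succ, ih]; ext v
      simp only [Equiv.Perm.mul_apply, Equiv.coe_addRight, succ_nsmul, add_assoc, add_comm w]]
  have : (p • w : Fin 3 → F) = 0 := by
    funext i
    simp [nsmul_eq_mul, CharP.cast_eq_zero F p]
  rw [this, Equiv.addRight_zero]

lemma vsub_max [Fintype F] (T' : Subgroup (Equiv.Perm (Fin 3 → F)))
    (hT' : (T' : Set (Equiv.Perm (Fin 3 → F))) ⊆ EVset F)
    (hcomm : ∀ a ∈ T', ∀ b ∈ T', a * b = b * a) :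
    Nat.card T' ≤ Nat.card (Vsub F) := by
  by_cases hex : ∃ g ∈ T', xpart g ≠ 0
  · obtain ⟨g, hg, hxg⟩ := hex
    calc Nat.card T' ≤ Fintype.card F ^ 2 := card_le_sq T' hT' hcomm hg hxg
      _ ≤ Fintype.card F ^ 3 := Nat.pow_le_pow_right Fintype.card_pos (by norm_num)
      _ = Nat.card (Vsub F) := vsub_card.symm
  · push_neg at hex
    have hle : T' ≤ Vsub F := fun t ht => trans_of_xpart (hT' ht) (hex t ht)
    exact Subgroup.card_le_of_le hle

end Stmt14

/-- every elementary abelian subgroup of `EV₊` of order `≥ q²·p`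
consists of translations; in particular the Thompson subgroup of `EV₊`
(generated by the elementary abelian subgroups of maximal order) is `V₊`. -/
theorem stmt_14 {F : Type*} [Field F] [Fintype F] (p : ℕ) [Fact p.Prime] [CharP F p]
    (hp : p ≠ 2) :
    (∀ T : Subgroup (Equiv.Perm (Fin 3 → F)), (T : Set (Equiv.Perm (Fin 3 → F))) ⊆ EVset F →
      (∀ a ∈ T, ∀ b ∈ T, a * b = b * a) → (∀ a ∈ T, a ^ p = 1) →
      Fintype.card F ^ 2 * p ≤ Nat.card T →
      (T : Set (Equiv.Perm (Fin 3 → F))) ⊆ transSet F) ∧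
    Subgroup.closure (⋃ T ∈ {T : Subgroup (Equiv.Perm (Fin 3 → F)) |
        (T : Set (Equiv.Perm (Fin 3 → F))) ⊆ EVset F ∧
        (∀ a ∈ T, ∀ b ∈ T, a * b = b * a) ∧ (∀ a ∈ T, a ^ p = 1) ∧
        ∀ T' : Subgroup (Equiv.Perm (Fin 3 → F)),
          (T' : Set (Equiv.Perm (Fin 3 → F))) ⊆ EVset F →
          (∀ a ∈ T', ∀ b ∈ T', a * b = b * a) → (∀ a ∈ T', a ^ p = 1) →
          Nat.card T' ≤ Nat.card T}, (T : Set (Equiv.Perm (Fin 3 → F)))) =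
      Subgroup.closure (transSet F) := by
  have hp2 : 2 ≤ p := (Fact.out : p.Prime).two_le
  constructor
  · intro T hT hcomm _ hcard
    exact Stmt14.part1 hp2 T hT hcomm hcard
  · have hVmem : Stmt14.Vsub F ∈ {T : Subgroup (Equiv.Perm (Fin 3 → F)) |
        (T : Set (Equiv.Perm (Fin 3 → F))) ⊆ EVset F ∧
        (∀ a ∈ T, ∀ b ∈ T, a * b = b * a) ∧ (∀ a ∈ T, a ^ p = 1) ∧
        ∀ T' : Subgroup (Equiv.Perm (Fin 3 → F)),
          (T' : Set (Equiv.Perm (Fin 3 → F))) ⊆ EVset F →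
          (∀ a ∈ T', ∀ b ∈ T', a * b = b * a) → (∀ a ∈ T', a ^ p = 1) →
          Nat.card T' ≤ Nat.card T} :=
      ⟨Stmt14.vsub_subset_EV, Stmt14.vsub_comm, Stmt14.vsub_exp p,
        fun T' h1 h2 _ => Stmt14.vsub_max T' h1 h2⟩
    have hqp : p ≤ Fintype.card F := by
      obtain ⟨n, hprime, hcardF⟩ := FiniteField.card F p
      rw [hcardF]
      calc p = p ^ 1 := (pow_one p).symm
        _ ≤ p ^ (n : ℕ) := Nat.pow_le_pow_right hprime.pos n.2
    have hset : (⋃ T ∈ {T : Subgroup (Equiv.Perm (Fin 3 → F)) |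
        (T : Set (Equiv.Perm (Fin 3 → F))) ⊆ EVset F ∧
        (∀ a ∈ T, ∀ b ∈ T, a * b = b * a) ∧ (∀ a ∈ T, a ^ p = 1) ∧
        ∀ T' : Subgroup (Equiv.Perm (Fin 3 → F)),
          (T' : Set (Equiv.Perm (Fin 3 → F))) ⊆ EVset F →
          (∀ a ∈ T', ∀ b ∈ T', a * b = b * a) → (∀ a ∈ T', a ^ p = 1) →
          Nat.card T' ≤ Nat.card T}, (T : Set (Equiv.Perm (Fin 3 → F)))) = transSet F := by
      apply subset_antisymm
      · refine Set.iUnion₂_subset fun T hTmem => ?_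
        obtain ⟨h1, h2, h3, hmax⟩ := hTmem
        have hge : Fintype.card F ^ 2 * p ≤ Nat.card T := by
          have h := hmax (Stmt14.Vsub F) Stmt14.vsub_subset_EV Stmt14.vsub_comm
            (Stmt14.vsub_exp p)
          rw [Stmt14.vsub_card] at h
          calc Fintype.card F ^ 2 * p ≤ Fintype.card F ^ 2 * Fintype.card F :=
                Nat.mul_le_mul_left _ hqp
            _ = Fintype.card F ^ 3 := by ring
            _ ≤ Nat.card T := h
        exact Stmt14.part1 hp2 T h1 h2 hge
      · intro g hg
        exact Set.mem_biUnion hVmem hg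
    rw [hset]
end

section
/- Let q = pⁿ with p odd, V = F_q³, F the group of coordinatewise Galois automorphisms of V (order n), E the unitriangular group {E(x)} and V_+ the translations. For every g ∈ FEV_+ ∖ V_+, the index [V_+ : C_{V_+}(g)] is at least p². -/
lemma mulVec_Emat {F : Type*} [Field F] (x : F) (v : Fin 3 → F) :
    (Emat x).mulVec v = ![v 0 + x * v 1 + x ^ 2 / 2 * v 2, v 1 + x * v 2, v 2] := by
  funext k
  fin_cases k <;>
    simp [Emat, Matrix.mulVec, dotProduct, Fin.sum_univ_three]

/-- let `g = f·E(x)·w₊ ∈ F·E·V₊` (apply `E(x)`, then the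
coordinatewise Galois automorphism `f`, then translate by `w`). If `g` is not a
translation, then the centralizer of `g` in `V₊` (identified with the set of
`c ∈ V` whose translation commutes with `g`) has index at least `p²` in `V₊`. -/
theorem stmt_15 {F : Type*} [Field F] [Fintype F] (p : ℕ) [Fact p.Prime] [CharP F p]
    (hp : p ≠ 2) (f : F ≃+* F) (x : F) (w : Fin 3 → F)
    (g : (Fin 3 → F) → (Fin 3 → F))
    (hg : ∀ v, g v = (fun k => f ((Emat x).mulVec v k)) + w)
    (hnt : ¬ ∃ c : Fin 3 → F, ∀ v, g v = v + c) :
    p ^ 2 * Nat.card {c : Fin 3 → F | ∀ v, g (v + c) = g v + c} ≤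
      Fintype.card (Fin 3 → F) := by
  classical
  have hcard3 : Fintype.card (Fin 3 → F) = Fintype.card F ^ 3 := by
    simp [Fintype.card_fun]
  obtain ⟨n, hpp, hn⟩ := FiniteField.card F p
  have hpF : p ≤ Fintype.card F := by
    rw [hn]; exact Nat.le_self_pow (by exact_mod_cast n.2.ne') p
  have key : {c : Fin 3 → F | ∀ v, g (v + c) = g v + c}
      = {c : Fin 3 → F | f (c 0) + f x * f (c 1) + f x ^ 2 / f 2 * f (c 2) = c 0 ∧
          f (c 1) + f x * f (c 2) = c 1 ∧ f (c 2) = c 2} := by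
    ext c
    simp only [Set.mem_setOf_eq, hg]
    constructor
    · intro h
      have h0 := congrFun (h 0) 0
      have h1 := congrFun (h 0) 1
      have h2 := congrFun (h 0) 2
      simp [mulVec_Emat] at h0 h1 h2
      refine ⟨by linear_combination h0, by linear_combination h1, by linear_combination h2⟩
    · rintro ⟨h0, h1, h2⟩ v
      funext k
      fin_cases k <;>
        · simp [mulVec_Emat]
          ring_nf
          ring_nf at h0 h1
          first
          | linear_combination h0
          | linear_combination h1
          | linear_combination h2
  rw [key]
  by_cases hf : ∀ a : F, f a = a
  · -- f is the identity; then x ≠ 0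
    have hx : x ≠ 0 := by
      intro hx0
      exact hnt ⟨w, fun v => by
        rw [hg v]; funext k; fin_cases k <;> simp [mulVec_Emat, hx0, hf]⟩
    have hset : {c : Fin 3 → F | f (c 0) + f x * f (c 1) + f x ^ 2 / f 2 * f (c 2) = c 0 ∧
          f (c 1) + f x * f (c 2) = c 1 ∧ f (c 2) = c 2}
        = {c : Fin 3 → F | c 1 = 0 ∧ c 2 = 0} := by
      ext c
      simp only [Set.mem_setOf_eq, hf]
      constructor
      · rintro ⟨h0, h1, -⟩
        have hc2 : c 2 = 0 := by
          have hz : x * c 2 = 0 := by linear_combination h1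
          rcases mul_eq_zero.mp hz with h | h
          · exact absurd h hx
          · exact h
        have hc1 : c 1 = 0 := by
          rw [hc2] at h0
          have hz : x * c 1 = 0 := by linear_combination h0
          rcases mul_eq_zero.mp hz with h | h
          · exact absurd h hx
          · exact h
        exact ⟨hc1, hc2⟩
      · rintro ⟨h1, h2⟩
        simp [h1, h2]
    rw [hset]
    have e : {c : Fin 3 → F | c 1 = 0 ∧ c 2 = 0} ≃ F :=
      { toFun := fun c => c.1 0
        invFun := fun a => ⟨![a, 0, 0], by simp⟩
        left_inv := fun c => by
          apply Subtype.ext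
          funext k
          fin_cases k <;> simp [c.2.1, c.2.2]
        right_inv := fun a => rfl }
    rw [Nat.card_congr e, Nat.card_eq_fintype_card, hcard3]
    calc p ^ 2 * Fintype.card F ≤ Fintype.card F ^ 2 * Fintype.card F :=
          Nat.mul_le_mul_right _ (Nat.pow_le_pow_left hpF 2)
      _ = Fintype.card F ^ 3 := by ring
  · -- f is not the identity
    push_neg at hf
    obtain ⟨a₀, ha₀⟩ := hf
    set K : Set F := {a : F | f a = a} with hK
    -- the fixed field as an additive subgroup
    let Kadd : AddSubgroup F :=
      { carrier := K
        zero_mem' := by simp [hK]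
        add_mem' := fun {a b} ha hb => by
          simp only [hK, Set.mem_setOf_eq] at *
          rw [map_add, ha, hb]
        neg_mem' := fun {a} ha => by
          simp only [hK, Set.mem_setOf_eq] at *
          rw [map_neg, ha] }
    set nK := Nat.card ↥K with hnK
    have hdvd : nK ∣ Fintype.card F := by
      have h1 := AddSubgroup.card_addSubgroup_dvd_card Kadd
      have heq : Nat.card ↥Kadd = nK :=
        Nat.card_congr (Equiv.subtypeEquivRight fun a => Iff.rfl)
      rwa [heq, Nat.card_eq_fintype_card] at h1
    have hlt : nK < Fintype.card F := by
      rw [hnK, Nat.card_coe_set_eq]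
      have h2 : K.ncard < (Set.univ : Set F).ncard := by
        apply Set.ncard_lt_ncard
        · exact ⟨Set.subset_univ K, fun h => ha₀ (h (Set.mem_univ a₀))⟩
        · exact Set.finite_univ
      simpa [Set.ncard_univ, Nat.card_eq_fintype_card] using h2
    have hpK : p * nK ≤ Fintype.card F := by
      obtain ⟨b, hbn, hb⟩ := (Nat.dvd_prime_pow hpp).mp (hn ▸ hdvd)
      have hblt : b < (n : ℕ) := by
        have := hlt
        rw [hb, hn] at this
        exact (Nat.pow_lt_pow_iff_right hpp.one_lt).mp this
      calc p * nK = p ^ (b + 1) := by rw [hb]; ring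
        _ ≤ p ^ (n : ℕ) := Nat.pow_le_pow_right hpp.pos hblt
        _ = Fintype.card F := hn.symm
    -- choice function for the affine condition on the middle coordinate
    set r : F → F := fun t => if h : ∃ a : F, f a + f x * t = a then h.choose else 0 with hr_def
    have hr : ∀ t : F, (∃ a : F, f a + f x * t = a) → f (r t) + f x * t = r t := by
      intro t h
      simp only [hr_def, dif_pos h]
      exact h.choose_spec
    -- injection into F × K × K
    set S := {c : Fin 3 → F | f (c 0) + f x * f (c 1) + f x ^ 2 / f 2 * f (c 2) = c 0 ∧
          f (c 1) + f x * f (c 2) = c 1 ∧ f (c 2) = c 2} with hS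
    have hmem : ∀ c : ↥S, c.1 1 - r (c.1 2) ∈ K := by
      rintro ⟨c, h0, h1, h2⟩
      have hex : ∃ a : F, f a + f x * (c 2) = a := ⟨c 1, by rw [← h2]; exact h1⟩
      have hrc := hr (c 2) hex
      have hc1 : f (c 1) + f x * (c 2) = c 1 := by rw [← h2]; exact h1
      simp only [hK, Set.mem_setOf_eq]
      rw [map_sub]
      linear_combination hc1 - hrc
    let ι : ↥S → F × ↥K × ↥K := fun c =>
      (c.1 0, ⟨c.1 1 - r (c.1 2), hmem c⟩, ⟨c.1 2, c.2.2.2⟩)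
    have hι : Function.Injective ι := by
      intro c d h
      have h0 : c.1 0 = d.1 0 := congrArg Prod.fst h
      have h2 : c.1 2 = d.1 2 := congrArg (fun z => (z.2.2 : F)) h
      have h1 : c.1 1 - r (c.1 2) = d.1 1 - r (d.1 2) := congrArg (fun z => (z.2.1 : F)) h
      apply Subtype.ext
      funext k
      fin_cases k
      · exact h0
      · show (c : Fin 3 → F) 1 = (d : Fin 3 → F) 1
        rw [h2] at h1; linear_combination h1
      · exact h2
    have hcardS : Nat.card ↥S ≤ Fintype.card F * (nK * nK) := by
      have := Nat.card_le_card_of_injective ι hι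
      rwa [Nat.card_prod, Nat.card_prod, ← hnK, Nat.card_eq_fintype_card (α := F)] at this
    calc p ^ 2 * Nat.card ↥S ≤ p ^ 2 * (Fintype.card F * (nK * nK)) :=
          Nat.mul_le_mul_left _ hcardS
      _ = Fintype.card F * ((p * nK) * (p * nK)) := by ring
      _ ≤ Fintype.card F * (Fintype.card F * Fintype.card F) :=
          Nat.mul_le_mul_left _ (Nat.mul_le_mul hpK hpK)
      _ = Fintype.card F ^ 3 := by ring
      _ = Fintype.card (Fin 3 → F) := hcard3.symm
end

section
/- Let p be an odd prime, q = pⁿ, E ≅ (F_q, +) and Q a cyclic p-group acting faithfully on E as a group of field automorphisms of F_q (a subgroup of the Sylow p-subgroup of Gal(F_q/F_p)). Then E is the unique elementary abelian p-subgroup of maximal order in the semidirect product QE; in particular the Thompson subgroup E(QE) equals E. -/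
/-- The subgroup `QE ≤ Sym(F_q)`: all maps `y ↦ f(y) + a` with `f ∈ Q`, `a ∈ F_q`,
as a set of permutations. -/
def QEset {F : Type*} [Field F] (Q : Subgroup (RingAut F)) : Set (Equiv.Perm F) :=
  {g | ∃ f ∈ Q, ∃ a : F, ∀ y : F, g y = f y + a}

/-- The translation subgroup `E = (F_q)₊ ≤ Sym(F_q)`. -/
def transGrp (F : Type*) [Field F] : Subgroup (Equiv.Perm F) :=
  Subgroup.closure (Set.range fun a : F => Equiv.addRight a)

section Aux

variable {F : Type*} [Field F]

lemma addRight_mul' (a b : F) :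
    (Equiv.addRight a) * (Equiv.addRight b) = Equiv.addRight (b + a) := by
  ext y; simp [Equiv.Perm.mul_apply, add_assoc]

lemma mem_transGrp {g : Equiv.Perm F} : g ∈ transGrp F ↔ ∃ a : F, g = Equiv.addRight a := by
  constructor
  · intro hg
    induction hg using Subgroup.closure_induction with
    | mem x hx => obtain ⟨a, rfl⟩ := hx; exact ⟨a, rfl⟩
    | one => exact ⟨0, by ext y; simp⟩
    | mul x y _ _ hx hy =>
      obtain ⟨a, rfl⟩ := hx; obtain ⟨b, rfl⟩ := hy
      exact ⟨b + a, addRight_mul' a b⟩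
    | inv x _ hx =>
      obtain ⟨a, rfl⟩ := hx
      exact ⟨-a, by ext y; simp⟩
  · rintro ⟨a, rfl⟩
    exact Subgroup.subset_closure ⟨a, rfl⟩

lemma addRight_pow (a : F) (k : ℕ) :
    (Equiv.addRight a) ^ k = Equiv.addRight ((k : F) * a) := by
  induction k with
  | zero => ext y; simp
  | succ k ih =>
    rw [pow_succ, ih, addRight_mul']
    congr 1
    push_cast
    ring

lemma addRight_injective : Function.Injective (fun a : F => Equiv.addRight a) := by
  intro a b h
  have := congrArg (fun e : Equiv.Perm F => e 0) h
  simpa using this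

lemma transGrp_coe :
    (transGrp F : Set (Equiv.Perm F)) = Set.range (fun a : F => Equiv.addRight a) := by
  ext g; simpa [Set.mem_range, eq_comm] using mem_transGrp (g := g)

lemma card_transGrp [Fintype F] : Nat.card (transGrp F) = Fintype.card F := by
  have h : Nat.card (transGrp F) = Nat.card (Set.range (fun a : F => Equiv.addRight a)) :=
    Nat.card_congr (Equiv.setCongr transGrp_coe)
  rw [h, Nat.card_range_of_injective addRight_injective, Nat.card_eq_fintype_card]

/-- Uniqueness of the decomposition `g = (f, a)`. -/
lemma qe_unique {g : Equiv.Perm F} {f f' : RingAut F} {a a' : F}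
    (h : ∀ y, g y = f y + a) (h' : ∀ y, g y = f' y + a') : f = f' ∧ a = a' := by
  have ha : a = a' := by
    have h0 := h 0; have h0' := h' 0
    simp only [map_zero, zero_add] at h0 h0'
    rw [← h0, ← h0']
  subst ha
  refine ⟨RingEquiv.ext fun y => ?_, rfl⟩
  exact add_right_cancel ((h y).symm.trans (h' y))

lemma two_le_pow_aux {e : ℕ} (he : 2 ≤ e) : e + 1 < 2 ^ e := by
  induction e with
  | zero => omega
  | succ k ih =>
    rcases Nat.lt_or_ge k 2 with hk | hk
    · interval_cases k
      · omega
      · norm_num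
    · have h1 := ih hk
      have h2 : (1:ℕ) ≤ 2 ^ k := Nat.one_le_two_pow
      rw [pow_succ]
      omega

lemma mul_lt_pow_aux {m d : ℕ} (hm : 2 ≤ m) (hd : 3 ≤ d) : m * d < m ^ d := by
  have h1 : d < 2 ^ (d - 1) := by
    have h := two_le_pow_aux (e := d - 1) (by omega)
    omega
  calc m * d < m * 2 ^ (d - 1) := mul_lt_mul_of_pos_left h1 (by omega)
    _ ≤ m * m ^ (d - 1) := Nat.mul_le_mul_left _ (Nat.pow_le_pow_left hm _)
    _ = m ^ d := by
        rw [← pow_succ']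
        congr 1
        omega

end Aux

theorem stmt_16 {F : Type*} [Field F] [Fintype F] (p n : ℕ) [Fact p.Prime] [CharP F p]
    (hp : p ≠ 2) (hcard : Fintype.card F = p ^ n)
    (Q : Subgroup (RingAut F)) (hQ : IsPGroup p Q) :
    (transGrp F : Set (Equiv.Perm F)) ⊆ QEset Q ∧
    (∀ a ∈ transGrp F, ∀ b ∈ transGrp F, a * b = b * a) ∧
    (∀ a ∈ transGrp F, a ^ p = 1) ∧
    Nat.card (transGrp F) = Fintype.card F ∧
    ∀ T : Subgroup (Equiv.Perm F), (T : Set (Equiv.Perm F)) ⊆ QEset Q →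
      (∀ a ∈ T, ∀ b ∈ T, a * b = b * a) → (∀ a ∈ T, a ^ p = 1) →
      Nat.card T ≤ Fintype.card F ∧
        (Nat.card T = Fintype.card F → T = transGrp F) := by
  have hpodd : 3 ≤ p := by
    have h2 := (Fact.out : p.Prime).two_le
    omega
  refine ⟨?_, ?_, ?_, card_transGrp, ?_⟩
  · intro g hg
    obtain ⟨a, rfl⟩ := mem_transGrp.mp hg
    exact ⟨1, Q.one_mem, a, fun y => rfl⟩
  · intro a ha b hb
    obtain ⟨x, rfl⟩ := mem_transGrp.mp ha
    obtain ⟨y, rfl⟩ := mem_transGrp.mp hb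
    rw [addRight_mul', addRight_mul', add_comm]
  · intro a ha
    obtain ⟨x, rfl⟩ := mem_transGrp.mp ha
    rw [addRight_pow, CharP.cast_eq_zero F p, zero_mul]
    ext y; simp
  · intro T hsub hcomm _hexp
    haveI : Finite (RingAut F) :=
      Finite.of_injective (fun f : RingAut F => (f : F → F)) DFunLike.coe_injective
    choose f hfQ a ha using fun g : T => hsub g.2
    have ha0 : ∀ g : T, a g = (g : Equiv.Perm F) 0 := by
      intro g
      have h := ha g 0
      simpa using h.symm
    -- π is a homomorphism
    have hmul : ∀ g h : T, f (g * h) = f g * f h := by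
      intro g h
      refine (qe_unique (f' := f g * f h) (a' := f g (a h) + a g) (ha (g * h)) (fun y => ?_)).1
      have h1 : ((g * h : T) : Equiv.Perm F) y = (g : Equiv.Perm F) ((h : Equiv.Perm F) y) := rfl
      have h2 : (f g * f h) y = f g (f h y) := rfl
      rw [h1, ha h, ha g, map_add, h2, add_assoc]
    let π : T →* RingAut F := MonoidHom.mk' (fun g => f g) hmul
    have hπ : ∀ g : T, π g = f g := fun _ => rfl
    -- translations in the kernel
    have hker_eq : ∀ g : T, π g = 1 → ∀ y, (g : Equiv.Perm F) y = y + (g : Equiv.Perm F) 0 := by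
      intro g hg y
      have h1 := ha g y
      rw [hπ] at hg
      rw [hg] at h1
      rw [h1, ha0 g]
      rfl
    -- kernel elements are fixed by all f g
    have hfix : ∀ g h : T, π h = 1 → f g ((h : Equiv.Perm F) 0) = (h : Equiv.Perm F) 0 := by
      intro g h hh
      have hc := hcomm (g : Equiv.Perm F) g.2 (h : Equiv.Perm F) h.2
      have h0 : ((g : Equiv.Perm F) * (h : Equiv.Perm F)) 0
          = ((h : Equiv.Perm F) * (g : Equiv.Perm F)) 0 := by rw [hc]
      have hgy : ∀ y, (g : Equiv.Perm F) y = f g y + a g := ha g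
      have hhy := hker_eq h hh
      have e1 : ((g : Equiv.Perm F) * (h : Equiv.Perm F)) 0
          = f g ((h : Equiv.Perm F) 0) + a g := by
        rw [Equiv.Perm.mul_apply]
        exact hgy _
      have e2 : ((h : Equiv.Perm F) * (g : Equiv.Perm F)) 0
          = (g : Equiv.Perm F) 0 + (h : Equiv.Perm F) 0 := by
        rw [Equiv.Perm.mul_apply, hhy]
      rw [e1, e2] at h0
      have hg0 : (g : Equiv.Perm F) 0 = a g := (ha0 g).symm
      rw [hg0] at h0
      have h3 : f g ((h : Equiv.Perm F) 0) + a g = (h : Equiv.Perm F) 0 + a g := by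
        rw [h0]; ring
      exact add_right_cancel h3
    have hRle : π.range ≤ Q := by
      rintro x ⟨g, rfl⟩
      exact hfQ g
    by_cases hR : π.range = ⊥
    · -- T consists of translations
      have hle : T ≤ transGrp F := by
        intro g hg
        have h1 : π ⟨g, hg⟩ = 1 := by
          have h2 : π ⟨g, hg⟩ ∈ π.range := ⟨⟨g, hg⟩, rfl⟩
          rwa [hR, Subgroup.mem_bot] at h2
        refine mem_transGrp.mpr ⟨g 0, ?_⟩
        ext y
        rw [Equiv.coe_addRight]
        exact hker_eq ⟨g, hg⟩ h1 y
      refine ⟨(Subgroup.card_le_of_le hle).trans (le_of_eq card_transGrp), fun hc => ?_⟩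
      exact Subgroup.eq_of_le_of_card_ge hle (by rw [card_transGrp, ← hc])
    · -- the image is a nontrivial p-group
      haveI : FaithfulSMul π.range F :=
        ⟨fun {g₁ g₂} h => Subtype.ext (RingEquiv.ext fun x => h x)⟩
      letI : Fintype π.range := Fintype.ofFinite _
      letI : Fintype (FixedPoints.subfield π.range F) := Fintype.ofFinite _
      have hart : Module.finrank (FixedPoints.subfield π.range F) F
          = Fintype.card π.range := FixedPoints.finrank_eq_card π.range F
      have hFK : Fintype.card F
          = Fintype.card (FixedPoints.subfield π.range F)
            ^ Module.finrank (FixedPoints.subfield π.range F) F := Module.card_eq_pow_finrank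
      -- kernel bound
      have hinj : Nat.card π.ker ≤ Fintype.card (FixedPoints.subfield π.range F) := by
        rw [← Nat.card_eq_fintype_card]
        have hmem : ∀ g : π.ker, (((g : T) : Equiv.Perm F) 0 : F)
            ∈ FixedPoints.subfield π.range F := by
          intro g r
          obtain ⟨g', hg'⟩ := MonoidHom.mem_range.mp r.2
          have h1 : (r : RingAut F) (((g : T) : Equiv.Perm F) 0)
              = ((g : T) : Equiv.Perm F) 0 := by
            rw [← hg']
            exact hfix g' (g : T) (MonoidHom.mem_ker.mp g.2)
          exact h1
        apply Nat.card_le_card_of_injective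
          (fun g : π.ker => (⟨((g : T) : Equiv.Perm F) 0, hmem g⟩ :
            FixedPoints.subfield π.range F))
        intro g₁ g₂ h12
        have h0 : ((g₁ : T) : Equiv.Perm F) 0 = ((g₂ : T) : Equiv.Perm F) 0 :=
          congrArg Subtype.val h12
        refine Subtype.ext (Subtype.ext (Equiv.ext fun y => ?_))
        rw [hker_eq (g₁ : T) (MonoidHom.mem_ker.mp g₁.2) y,
          hker_eq (g₂ : T) (MonoidHom.mem_ker.mp g₂.2) y, h0]
      have hcardT : Nat.card T = Nat.card π.range * Nat.card π.ker := by
        rw [Subgroup.card_eq_card_quotient_mul_card_subgroup π.ker]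
        congr 1
        exact Nat.card_congr (QuotientGroup.quotientKerEquivRange π).toEquiv
      obtain ⟨r, hrcard⟩ := IsPGroup.iff_card.mp (hQ.to_le hRle)
      have hr1 : r ≠ 0 := by
        rintro rfl
        rw [pow_zero] at hrcard
        exact hR (Subgroup.card_eq_one.mp hrcard)
      have hd3 : 3 ≤ Nat.card π.range := by
        rw [hrcard]
        exact le_trans hpodd (Nat.le_self_pow hr1 p)
      have hm2 : 2 ≤ Fintype.card (FixedPoints.subfield π.range F) := Fintype.one_lt_card
      have hlt : Nat.card T < Fintype.card F := by
        rw [hcardT, hFK, hart, ← Nat.card_eq_fintype_card (α := π.range)]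
        calc Nat.card π.range * Nat.card π.ker
            ≤ Nat.card π.range * Fintype.card (FixedPoints.subfield π.range F) :=
              Nat.mul_le_mul_left _ hinj
          _ = Fintype.card (FixedPoints.subfield π.range F) * Nat.card π.range :=
              Nat.mul_comm _ _
          _ < Fintype.card (FixedPoints.subfield π.range F) ^ Nat.card π.range :=
              mul_lt_pow_aux hm2 hd3
      exact ⟨le_of_lt hlt, fun hc => absurd hc (by omega)⟩
end

section
/- Let q = pⁿ, J ⊆ F_q with |J| coprime to p, and Q the set of pairs (α, f) with α ∈ F_q and f in the Sylow p-subgroup of Gal(F_q/F_p) such that f(J) + α = J. Then Q is a subgroup of F_q ⋊ Gal(F_q/F_p) under (α,f)·(β,g) = (α + f(β), f∘g), the projection (α,f) ↦ f is injective on Q (so Q is a cyclic p-group), and Q ∩ (F_q × {id}) is trivial. -/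
/-- Any two ring automorphisms of a finite field commute (the automorphism
group is cyclic, generated by Frobenius; here we use that `Fˣ` is cyclic). -/
lemma ringAut_commute {F : Type*} [Field F] [Finite F] (f g : RingAut F) : f * g = g * f := by
  obtain ⟨ζ, hζ⟩ := IsCyclic.exists_generator (α := Fˣ)
  obtain ⟨k, hk⟩ := hζ (Units.map (f : F →* F) ζ)
  obtain ⟨l, hl⟩ := hζ (Units.map (g : F →* F) ζ)
  have hfζ : f (ζ : F) = (ζ : F) ^ k := by
    have := congrArg Units.val hk
    simpa using this.symm
  have hgζ : g (ζ : F) = (ζ : F) ^ l := by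
    have := congrArg Units.val hl
    simpa using this.symm
  ext x
  rcases eq_or_ne x 0 with rfl | hx
  · simp
  obtain ⟨m, hm⟩ := hζ (Units.mk0 x hx)
  have hxm : x = (ζ : F) ^ m := by
    have := congrArg Units.val hm
    simpa using this.symm
  have h1 : (f * g) x = f (g x) := rfl
  have h2 : (g * f) x = g (f x) := rfl
  have key : f (g x) = g (f x) := by
    simp only [hxm, map_zpow₀, hfζ, hgζ, ← zpow_mul]
    ring_nf
  exact h1.trans (key.trans h2.symm)

/-- If `J + α = J` with `α ≠ 0`, then `J` is a union of cosets of the subgroup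
generated by `α`, of order `p`, hence `p ∣ |J|`. -/
lemma translate_dvd_card {F : Type*} [Field F] [Fintype F] [DecidableEq F]
    (p : ℕ) [Fact p.Prime] [CharP F p] (J : Finset F) (α : F) (hα : α ≠ 0)
    (h : J.image (fun j => j + α) = J) : p ∣ J.card := by
  have hstep : ∀ x ∈ J, x + α ∈ J := by
    intro x hx
    rw [← h]
    exact Finset.mem_image_of_mem _ hx
  have hmem : ∀ (n : ℕ) (x : F), x ∈ J → x + (n : F) * α ∈ J := by
    intro n
    induction n with
    | zero => simp
    | succ n ih =>
      intro x hx
      have h2 := hstep _ (ih x hx)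
      have h3 : x + ((n : ℕ) + 1 : F) * α = x + (n : F) * α + α := by ring
      push_cast
      rw [h3]
      exact h2
  let c : ZMod p →+* F := ZMod.castHom (dvd_refl p) F
  letI : MulAction (Multiplicative (ZMod p)) {x // x ∈ J} :=
    { smul := fun k x => ⟨x.1 + c (Multiplicative.toAdd k) * α, by
        have : c (Multiplicative.toAdd k) = (((Multiplicative.toAdd k).val : ℕ) : F) := by
          simp [c, ZMod.natCast_val]
        rw [this]
        exact hmem _ _ x.2⟩
      one_smul := fun x => by
        apply Subtype.ext
        show x.1 + c (Multiplicative.toAdd 1) * α = x.1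
        simp
      mul_smul := fun k l x => by
        apply Subtype.ext
        show x.1 + c (Multiplicative.toAdd (k * l)) * α
            = (x.1 + c (Multiplicative.toAdd l) * α) + c (Multiplicative.toAdd k) * α
        rw [toAdd_mul, map_add]
        ring }
  have hP : IsPGroup p (Multiplicative (ZMod p)) := by
    exact IsPGroup.of_card (n := 1) (by simp [Nat.card_eq_fintype_card, pow_one])
  have hfix : IsEmpty (MulAction.fixedPoints (Multiplicative (ZMod p)) {x // x ∈ J}) := by
    constructor
    rintro ⟨x, hx⟩
    have := hx (Multiplicative.ofAdd (1 : ZMod p))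
    have h2 : x.1 + c (1 : ZMod p) * α = x.1 := congrArg Subtype.val this
    simp only [map_one, one_mul] at h2
    exact hα (add_eq_left.mp h2)
  have hmod := hP.card_modEq_card_fixedPoints (α := {x // x ∈ J})
  rw [Nat.card_of_isEmpty (α := (MulAction.fixedPoints (Multiplicative (ZMod p)) {x // x ∈ J}))] at hmod
  have : Nat.card {x // x ∈ J} = J.card := by
    simp [Nat.card_eq_fintype_card]
  rw [this] at hmod
  exact (Nat.modEq_zero_iff_dvd).mp hmod

/-- The set `Q` of pairs `(α, f)`, with `f` of `p`-power order in `Gal(F_q/F_p)`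
(i.e. in its Sylow `p`-subgroup) and `α ∈ F_q`, such that `f(J) + α = J`. -/
def stabQ {F : Type*} [Field F] [DecidableEq F] (p : ℕ) (J : Finset F) :
    Set (F × RingAut F) :=
  {af | (∃ k : ℕ, af.2 ^ p ^ k = 1) ∧ (J.image fun j => af.2 j + af.1) = J}

/-- if `|J|` is coprime to `p`, then `Q = {(α,f) : f(J) + α = J}` is
a subgroup of `F_q ⋊ Gal(F_q/F_p)` under `(α,f)·(β,g) = (α + f(β), f∘g)` (it
contains the identity and is closed under multiplication and inversion), the
projection `(α,f) ↦ f` is injective on `Q` (so `Q` is a cyclic `p`-group), and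
`Q ∩ (F_q × {id})` is trivial. -/
theorem stmt_17 {F : Type*} [Field F] [Fintype F] [DecidableEq F]
    (p : ℕ) [Fact p.Prime] [CharP F p] (J : Finset F) (hJ : ¬ p ∣ J.card) :
    ((0, 1) : F × RingAut F) ∈ stabQ p J ∧
    (∀ a ∈ stabQ p J, ∀ b ∈ stabQ p J,
      ((a.1 + a.2 b.1, a.2 * b.2) : F × RingAut F) ∈ stabQ p J) ∧
    (∀ a ∈ stabQ p J, ((-(a.2⁻¹ a.1), a.2⁻¹) : F × RingAut F) ∈ stabQ p J) ∧
    (∀ a ∈ stabQ p J, ∀ b ∈ stabQ p J, a.2 = b.2 → a.1 = b.1) ∧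
    (∀ α : F, ((α, 1) : F × RingAut F) ∈ stabQ p J → α = 0) := by
  have h1 : ((0, 1) : F × RingAut F) ∈ stabQ p J := by
    refine ⟨⟨0, one_pow _⟩, ?_⟩
    have e : (fun j : F => (1 : RingAut F) j + 0) = id := by
      funext j
      show j + 0 = j
      ring
    rw [e, Finset.image_id]
  have h5 : ∀ α : F, ((α, 1) : F × RingAut F) ∈ stabQ p J → α = 0 := by
    intro α hmem
    obtain ⟨-, himg⟩ := hmem
    by_contra hα
    apply hJ
    apply translate_dvd_card p J α hα
    have e : (fun j : F => (1 : RingAut F) j + α) = (fun j => j + α) := rfl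
    rw [← e]
    exact himg
  have h2 : ∀ a ∈ stabQ p J, ∀ b ∈ stabQ p J,
      ((a.1 + a.2 b.1, a.2 * b.2) : F × RingAut F) ∈ stabQ p J := by
    rintro a ⟨⟨k, hk⟩, ha2⟩ b ⟨⟨l, hl⟩, hb2⟩
    constructor
    · refine ⟨k + l, ?_⟩
      have hc : Commute a.2 b.2 := ringAut_commute a.2 b.2
      rw [hc.mul_pow]
      have e1 : a.2 ^ p ^ (k + l) = (a.2 ^ p ^ k) ^ p ^ l := by
        rw [← pow_mul, ← pow_add]
      have e2 : b.2 ^ p ^ (k + l) = (b.2 ^ p ^ l) ^ p ^ k := by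
        rw [← pow_mul, ← pow_add, Nat.add_comm]
      rw [e1, e2, hk, hl, one_pow, one_pow, one_mul]
    · show J.image (fun j => (a.2 * b.2) j + (a.1 + a.2 b.1)) = J
      have hcomp : (fun j => (a.2 * b.2) j + (a.1 + a.2 b.1))
          = (fun j => a.2 j + a.1) ∘ (fun j => b.2 j + b.1) := by
        funext j
        show a.2 (b.2 j) + (a.1 + a.2 b.1) = a.2 (b.2 j + b.1) + a.1
        rw [map_add]
        ring
      rw [hcomp, ← Finset.image_image, hb2, ha2]
  have h3 : ∀ a ∈ stabQ p J, ((-(a.2⁻¹ a.1), a.2⁻¹) : F × RingAut F) ∈ stabQ p J := by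
    rintro a ⟨⟨k, hk⟩, ha2⟩
    refine ⟨⟨k, by rw [inv_pow, hk, inv_one]⟩, ?_⟩
    show J.image (fun j => a.2⁻¹ j + -(a.2⁻¹ a.1)) = J
    conv_lhs => rw [← ha2]
    rw [Finset.image_image]
    have hid : ((fun j => a.2⁻¹ j + -(a.2⁻¹ a.1)) ∘ (fun j => a.2 j + a.1)) = id := by
      funext j
      show a.2⁻¹ (a.2 j + a.1) + -(a.2⁻¹ a.1) = j
      have hinv : a.2⁻¹ (a.2 j) = j := a.2.symm_apply_apply j
      rw [map_add, hinv]
      ring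
    rw [hid, Finset.image_id]
  have h4 : ∀ a ∈ stabQ p J, ∀ b ∈ stabQ p J, a.2 = b.2 → a.1 = b.1 := by
    intro a ha b hb heq
    have hmemb := h3 b hb
    have hprod := h2 a ha _ hmemb
    have h21 : a.2 * b.2⁻¹ = 1 := by
      rw [heq]
      group
    have hval : a.1 + a.2 (-(b.2⁻¹ b.1)) = a.1 - b.1 := by
      rw [heq, map_neg]
      have : b.2 (b.2⁻¹ b.1) = b.1 := b.2.apply_symm_apply b.1
      rw [this]
      ring
    rw [hval, h21] at hprod
    exact sub_eq_zero.mp (h5 (a.1 - b.1) hprod)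
  exact ⟨h1, h2, h3, h4, h5⟩
end
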